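/- arXiv:2010.06509 — 5 statements merged into one kernel-verified Lean document; each statement's English description precedes it below -/
import Mathlib

section
/- Let d ≥ 1 be an integer, s ∈ (0,1), and u ∈ L¹(ℝ^d). Then there exists a constant C = C(d,s) such that for every x ∈ (0,1)^d and every real S ≥ 2√d, the family (k ↦ ∫_{(0,1)^d} |u(y)|/‖x − y − S·k‖^{d+2s} dy) indexed by k ∈ ℤ^d \ {0} is summable and Σ_{k∈ℤ^d, k≠0} ∫_{(0,1)^d} |u(y)|/‖x − y − S·k‖^{d+2s} dy ≤ C · ‖u‖_{L¹} · S^{−(d+2s)}. -/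
open MeasureTheory Filter

/-- An integer vector `k ∈ ℤ^d` viewed as a point of Euclidean space `ℝ^d`. -/
noncomputable def intVec (d : ℕ) (k : Fin d → ℤ) : EuclideanSpace ℝ (Fin d) :=
  WithLp.toLp 2 (fun i => (k i : ℝ))

lemma aux_summable_int {r : ℝ} (hr : 1 < r) :
    Summable (fun n : ℤ => ((1:ℝ) + |(n:ℝ)|) ^ (-r)) := by
  have h1 := Real.summable_abs_int_rpow hr
  have h2 : Summable (fun n : ℤ => if n = 0 then (1:ℝ) else 0) :=
    summable_of_ne_finset_zero (s := {0}) (fun n hn => if_neg (by simpa using hn))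
  refine Summable.of_nonneg_of_le (fun n => Real.rpow_nonneg (by positivity) _)
    (fun n => ?_) (h1.add h2)
  by_cases hn : n = 0
  · subst hn
    simp [Real.zero_rpow (show -r ≠ 0 by intro h; nlinarith [neg_eq_zero.mp h])]
  · simp only [if_neg hn, add_zero]
    exact Real.rpow_le_rpow_of_nonpos (abs_pos.mpr (Int.cast_ne_zero.mpr hn))
      (by linarith [abs_nonneg ((n:ℝ))]) (by linarith)

lemma aux_summable_pi (d : ℕ) {r : ℝ} (hr : 1 < r) :
    Summable (fun k : Fin d → ℤ => ∏ i, ((1:ℝ) + |(k i : ℝ)|) ^ (-r)) := by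
  induction d with
  | zero => exact Summable.of_finite
  | succ n ih =>
      have hnn1 : ∀ m : ℤ, 0 ≤ ((1:ℝ) + |(m:ℝ)|) ^ (-r) :=
        fun m => Real.rpow_nonneg (by positivity) _
      have h := (aux_summable_int hr).mul_of_nonneg ih hnn1
        (fun k => Finset.prod_nonneg fun i _ => hnn1 _)
      rw [← (Fin.consEquiv (fun _ => ℤ)).summable_iff]
      refine h.congr fun p => ?_
      simp [Function.comp, Fin.prod_univ_succ]

lemma coord_le_norm (d : ℕ) (v : EuclideanSpace ℝ (Fin d)) (i : Fin d) : |v i| ≤ ‖v‖ := by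
  rw [EuclideanSpace.norm_eq, ← Real.sqrt_sq_eq_abs]
  simp_rw [Real.norm_eq_abs, sq_abs]
  exact Real.sqrt_le_sqrt (Finset.single_le_sum (fun j _ => sq_nonneg (v j)) (Finset.mem_univ i))

lemma one_le_norm_intVec (d : ℕ) {k : Fin d → ℤ} (hk : k ≠ 0) : 1 ≤ ‖intVec d k‖ := by
  obtain ⟨i, hi⟩ := Function.ne_iff.mp hk
  have h1 : (1:ℝ) ≤ |intVec d k i| := by
    have : (1:ℤ) ≤ |k i| := Int.one_le_abs (by simpa using hi)
    calc (1:ℝ) ≤ (|k i| : ℝ) := by exact_mod_cast this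
    _ = |intVec d k i| := by simp [intVec]
  exact h1.trans (coord_le_norm d _ i)

lemma norm_intVec_bound (d : ℕ) (hd : 1 ≤ d) {p : ℝ} (hp0 : 0 < p) {k : Fin d → ℤ}
    (hk : k ≠ 0) :
    ‖intVec d k‖ ^ (-p) ≤ (2:ℝ) ^ p * ∏ i, ((1:ℝ) + |(k i : ℝ)|) ^ (-(p / d)) := by
  set K := intVec d k with hK
  have hK1 : 1 ≤ ‖K‖ := one_le_norm_intVec d hk
  have hKpos : (0:ℝ) < ‖K‖ := by linarith
  have hd0 : (0:ℝ) < (d:ℝ) := by exact_mod_cast hd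
  -- step 1 : ‖K‖ ^ (-p) ≤ 2^p * (1 + ‖K‖) ^ (-p)
  have step1 : ‖K‖ ^ (-p) ≤ (2:ℝ) ^ p * (1 + ‖K‖) ^ (-p) := by
    have h2 : (1 + ‖K‖) ≤ 2 * ‖K‖ := by linarith
    have := Real.rpow_le_rpow_of_nonpos (by linarith) h2 (neg_nonpos.mpr hp0.le)
    calc ‖K‖ ^ (-p) = (2:ℝ) ^ p * ((2 * ‖K‖) ^ (-p)) := by
          rw [Real.mul_rpow (by norm_num) hKpos.le, ← mul_assoc,
            ← Real.rpow_add (by norm_num), add_neg_cancel, Real.rpow_zero, one_mul]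
      _ ≤ (2:ℝ) ^ p * (1 + ‖K‖) ^ (-p) := by
          exact mul_le_mul_of_nonneg_left this (Real.rpow_nonneg (by norm_num) _)
  -- step 2 : (1 + ‖K‖) ^ (-p) ≤ ∏ i, (1 + |k i|) ^ (-(p/d))
  have step2 : (1 + ‖K‖) ^ (-p) ≤ ∏ i, ((1:ℝ) + |(k i : ℝ)|) ^ (-(p / d)) := by
    have hprodpos : (0:ℝ) < ∏ i, ((1:ℝ) + |(k i : ℝ)|) :=
      Finset.prod_pos fun i _ => by positivity
    have hprodle : ∏ i, ((1:ℝ) + |(k i : ℝ)|) ≤ (1 + ‖K‖) ^ d := by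
      have hle : ∀ i ∈ Finset.univ, ((1:ℝ) + |(k i : ℝ)|) ≤ 1 + ‖K‖ := by
        intro i _
        have : |(k i : ℝ)| ≤ ‖K‖ := by
          have := coord_le_norm d K i
          simpa [hK, intVec] using this
        linarith
      calc ∏ i, ((1:ℝ) + |(k i : ℝ)|) ≤ ∏ _i : Fin d, (1 + ‖K‖) :=
            Finset.prod_le_prod (fun i _ => by positivity) hle
        _ = (1 + ‖K‖) ^ d := by rw [Finset.prod_const, Finset.card_univ, Fintype.card_fin]
    have h1 := Real.rpow_le_rpow_of_nonpos (z := -(p / (d:ℝ))) hprodpos hprodle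
      (neg_nonpos.mpr (by positivity))
    calc (1 + ‖K‖) ^ (-p) = ((1 + ‖K‖) ^ (d:ℕ)) ^ (-(p / d)) := by
          rw [← Real.rpow_natCast (1 + ‖K‖) d, ← Real.rpow_mul (by linarith)]
          congr 1
          field_simp
      _ ≤ (∏ i, ((1:ℝ) + |(k i : ℝ)|)) ^ (-(p / d)) := h1
      _ = ∏ i, ((1:ℝ) + |(k i : ℝ)|) ^ (-(p / d)) :=
          (Real.finset_prod_rpow _ _ (fun i _ => by positivity) _).symm
  calc ‖K‖ ^ (-p) ≤ (2:ℝ) ^ p * (1 + ‖K‖) ^ (-p) := step1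
    _ ≤ (2:ℝ) ^ p * ∏ i, ((1:ℝ) + |(k i : ℝ)|) ^ (-(p / d)) :=
        mul_le_mul_of_nonneg_left step2 (Real.rpow_nonneg (by norm_num) _)

lemma key_summable (d : ℕ) (hd : 1 ≤ d) {p : ℝ} (hp : (d:ℝ) < p) :
    Summable (fun k : {k : Fin d → ℤ // k ≠ 0} => ‖intVec d (k : Fin d → ℤ)‖ ^ (-p)) := by
  have hd0 : (0:ℝ) < (d:ℝ) := by exact_mod_cast hd
  have hp0 : 0 < p := lt_trans hd0 hp
  have hr : 1 < p / d := (one_lt_div hd0).mpr hp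
  have h := ((aux_summable_pi d hr).mul_left ((2:ℝ) ^ p)).subtype {k : Fin d → ℤ | k ≠ 0}
  refine Summable.of_nonneg_of_le (fun k => Real.rpow_nonneg (norm_nonneg _) _)
    (fun k => norm_intVec_bound d hd hp0 k.2) h

/-- For `u ∈ L¹(ℝ^d)` there is a constant `C = C(d,s)` such that for every `x ∈ (0,1)^d`
and every `S ≥ 2√d`, the family `k ↦ ∫_{(0,1)^d} |u(y)|/‖x − y − S·k‖^{d+2s} dy`
indexed by `k ∈ ℤ^d \ {0}` is summable with sum at most `C·‖u‖_{L¹}·S^{−(d+2s)}`. -/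
theorem periodic_images_total_bound (d : ℕ) (hd : 1 ≤ d) (s : ℝ) (hs : s ∈ Set.Ioo (0 : ℝ) 1)
    (u : EuclideanSpace ℝ (Fin d) → ℝ) (hu : Integrable u) :
    ∃ C : ℝ, ∀ x : EuclideanSpace ℝ (Fin d), (∀ i, x i ∈ Set.Ioo (0 : ℝ) 1) →
      ∀ S : ℝ, 2 * Real.sqrt d ≤ S →
        Summable (fun k : {k : Fin d → ℤ // k ≠ 0} =>
          ∫ y in {y : EuclideanSpace ℝ (Fin d) | ∀ i, y i ∈ Set.Ioo (0 : ℝ) 1},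
            |u y| / ‖x - y - S • intVec d (k : Fin d → ℤ)‖ ^ ((d : ℝ) + 2 * s)) ∧
        (∑' k : {k : Fin d → ℤ // k ≠ 0},
            ∫ y in {y : EuclideanSpace ℝ (Fin d) | ∀ i, y i ∈ Set.Ioo (0 : ℝ) 1},
              |u y| / ‖x - y - S • intVec d (k : Fin d → ℤ)‖ ^ ((d : ℝ) + 2 * s))
          ≤ C * (∫ y, |u y|) * S ^ (-((d : ℝ) + 2 * s)) := by
  obtain ⟨hs0, hs1⟩ := hs
  have hd0 : (0:ℝ) < (d:ℝ) := by exact_mod_cast hd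
  set p : ℝ := (d : ℝ) + 2 * s with hp_def
  have hp0 : 0 < p := by positivity
  have hpd : (d:ℝ) < p := by simp only [hp_def]; linarith
  have hA := key_summable d hd hpd
  set A : ℝ := ∑' k : {k : Fin d → ℤ // k ≠ 0}, ‖intVec d (k : Fin d → ℤ)‖ ^ (-p) with hA_def
  have hAnn : 0 ≤ A := tsum_nonneg fun k => Real.rpow_nonneg (norm_nonneg _) _
  refine ⟨(2:ℝ) ^ p * A, ?_⟩
  intro x hx S hS
  have hsd : (1:ℝ) ≤ Real.sqrt d := Real.one_le_sqrt.mpr (by exact_mod_cast hd)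
  have hS0 : (0:ℝ) < S := by linarith
  set Q : Set (EuclideanSpace ℝ (Fin d)) := {y | ∀ i, y i ∈ Set.Ioo (0:ℝ) 1} with hQdef
  have hQm : MeasurableSet Q := by
    have : Q = ⋂ i, (fun y : EuclideanSpace ℝ (Fin d) => y i) ⁻¹' Set.Ioo 0 1 := by
      ext y; simp [hQdef]
    rw [this]
    exact MeasurableSet.iInter fun i =>
      measurableSet_Ioo.preimage ((EuclideanSpace.proj (𝕜 := ℝ) i).continuous.measurable)
  have hI : Integrable (fun y => |u y|) := hu.abs
  have hInn : 0 ≤ ∫ y, |u y| := integral_nonneg fun y => abs_nonneg _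
  -- distance lower bound
  have hdist : ∀ k : {k : Fin d → ℤ // k ≠ 0}, ∀ y ∈ Q,
      S / 2 * ‖intVec d (k : Fin d → ℤ)‖ ≤ ‖x - y - S • intVec d (k : Fin d → ℤ)‖ := by
    rintro ⟨k, hk⟩ y hy
    set K := intVec d k with hK
    have hK1 : 1 ≤ ‖K‖ := one_le_norm_intVec d hk
    have hxy : ‖x - y‖ ≤ Real.sqrt d := by
      rw [EuclideanSpace.norm_eq]
      have hb : ∑ i, ‖(x - y) i‖ ^ 2 ≤ (d : ℝ) := by
        calc ∑ i, ‖(x - y) i‖ ^ 2 ≤ ∑ _i : Fin d, (1:ℝ) := by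
              refine Finset.sum_le_sum fun i _ => ?_
              have h1 := hx i
              have h2 := hy i
              simp only [Set.mem_Ioo] at h1 h2
              have : (x - y) i = x i - y i := by simp
              rw [this, Real.norm_eq_abs, sq_abs]
              nlinarith
          _ = (d : ℝ) := by simp
      exact Real.sqrt_le_sqrt hb
    have h1 : ‖S • K‖ - ‖x - y‖ ≤ ‖x - y - S • K‖ := by
      have := norm_sub_norm_le (S • K) (x - y)
      rw [norm_sub_rev (S • K) (x - y)] at this
      linarith
    have h2 : ‖S • K‖ = S * ‖K‖ := by
      rw [norm_smul, Real.norm_eq_abs, abs_of_pos hS0]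
    nlinarith
  -- per-term bound
  have hterm : ∀ k : {k : Fin d → ℤ // k ≠ 0},
      (∫ y in Q, |u y| / ‖x - y - S • intVec d (k : Fin d → ℤ)‖ ^ p)
        ≤ (S / 2) ^ (-p) * ‖intVec d (k : Fin d → ℤ)‖ ^ (-p) * ∫ y, |u y| := by
    intro k
    set K := intVec d (k : Fin d → ℤ) with hK
    have hK1 : 1 ≤ ‖K‖ := one_le_norm_intVec d k.2
    set b : ℝ := S / 2 * ‖K‖ with hb_def
    have hb0 : 0 < b := by positivity
    set c : ℝ := b ^ (-p) with hc_def
    have hc0 : 0 ≤ c := Real.rpow_nonneg hb0.le _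
    have hptwise : ∀ y ∈ Q, |u y| / ‖x - y - S • K‖ ^ p ≤ c * |u y| := by
      intro y hy
      have hden : b ^ p ≤ ‖x - y - S • K‖ ^ p :=
        Real.rpow_le_rpow hb0.le (hdist k y hy) hp0.le
      have hbp : 0 < b ^ p := Real.rpow_pos_of_pos hb0 _
      calc |u y| / ‖x - y - S • K‖ ^ p ≤ |u y| / b ^ p :=
            by gcongr
        _ = c * |u y| := by
            rw [hc_def, Real.rpow_neg hb0.le, div_eq_mul_inv, mul_comm]
    have hcont : Continuous fun y : EuclideanSpace ℝ (Fin d) => ‖x - y - S • K‖ ^ p :=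
      (((continuous_const.sub continuous_id).sub continuous_const).norm).rpow_const
        fun y => Or.inr hp0.le
    have hASM : AEStronglyMeasurable
        (fun y => |u y| / ‖x - y - S • K‖ ^ p) (volume.restrict Q) :=
      ((hI.aemeasurable.div hcont.aemeasurable).aestronglyMeasurable).restrict
    have hgint : IntegrableOn (fun y => c * |u y|) Q := ((hI.const_mul c).restrict)
    have hfint : IntegrableOn (fun y => |u y| / ‖x - y - S • K‖ ^ p) Q := by
      refine Integrable.mono' hgint hASM ?_
      refine (ae_restrict_iff' hQm).mpr (ae_of_all _ fun y hy => ?_)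
      have h1 := hptwise y hy
      have h2 : 0 ≤ |u y| / ‖x - y - S • K‖ ^ p := by positivity
      rwa [Real.norm_eq_abs, abs_of_nonneg h2]
    calc (∫ y in Q, |u y| / ‖x - y - S • K‖ ^ p) ≤ ∫ y in Q, c * |u y| :=
          setIntegral_mono_on hfint hgint hQm hptwise
      _ = c * ∫ y in Q, |u y| := by rw [integral_const_mul]
      _ ≤ c * ∫ y, |u y| := by
          refine mul_le_mul_of_nonneg_left ?_ hc0
          exact setIntegral_le_integral hI (ae_of_all _ fun y => abs_nonneg _)
      _ = (S / 2) ^ (-p) * ‖K‖ ^ (-p) * ∫ y, |u y| := by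
          rw [hc_def, hb_def, Real.mul_rpow (by positivity) (norm_nonneg _)]
  -- summable majorant
  have hg : Summable (fun k : {k : Fin d → ℤ // k ≠ 0} =>
      (S / 2) ^ (-p) * ‖intVec d (k : Fin d → ℤ)‖ ^ (-p) * ∫ y, |u y|) :=
    (hA.mul_left ((S / 2) ^ (-p))).mul_right _
  have htnn : ∀ k : {k : Fin d → ℤ // k ≠ 0},
      0 ≤ ∫ y in Q, |u y| / ‖x - y - S • intVec d (k : Fin d → ℤ)‖ ^ p :=
    fun k => setIntegral_nonneg hQm fun y _ => by positivity
  have hsum : Summable (fun k : {k : Fin d → ℤ // k ≠ 0} =>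
      ∫ y in Q, |u y| / ‖x - y - S • intVec d (k : Fin d → ℤ)‖ ^ p) :=
    Summable.of_nonneg_of_le htnn hterm hg
  refine ⟨hsum, ?_⟩
  have htsum := Summable.tsum_le_tsum hterm hsum hg
  have hgsum : ∑' k : {k : Fin d → ℤ // k ≠ 0},
      (S / 2) ^ (-p) * ‖intVec d (k : Fin d → ℤ)‖ ^ (-p) * ∫ y, |u y|
      = (S / 2) ^ (-p) * A * ∫ y, |u y| := by
    rw [hA_def, ← tsum_mul_left, ← tsum_mul_right]
  have hhalf : (S / 2) ^ (-p) = (2:ℝ) ^ p * S ^ (-p) := by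
    rw [Real.div_rpow hS0.le (by norm_num : (0:ℝ) ≤ 2), Real.rpow_neg (by norm_num : (0:ℝ) ≤ 2)]
    field_simp
  calc (∑' k : {k : Fin d → ℤ // k ≠ 0},
        ∫ y in Q, |u y| / ‖x - y - S • intVec d (k : Fin d → ℤ)‖ ^ p)
      ≤ (S / 2) ^ (-p) * A * ∫ y, |u y| := by rw [← hgsum]; exact htsum
    _ = (2:ℝ) ^ p * A * (∫ y, |u y|) * S ^ (-p) := by rw [hhalf]; ring
end

section
/- Let d ≥ 1 and N ≥ 1 be integers and s ∈ (0,1). Define Φ(j) = N^{2s}·(2π)^{−d}·∫_{[−π,π]^d} ‖ω‖^{2s}·e^{i⟨ω, j⟩} dω for j ∈ ℤ^d, and Y(x) = Σ_{m=−N}^{N−1} e^{imx} for x ∈ ℝ. Then for every k ∈ {−N, …, N−1}^d, Σ_{j ∈ {−N,…,N−1}^d} Φ(j) · e^{−iπ⟨k, j⟩/N} = π^{2s}·(2N)^{−d} · ∫_{[−N, N]^d} ‖ω‖^{2s} · Π_{l=1}^d Y((π/N)·(ω_l − k_l)) dω. -/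
open MeasureTheory Filter Complex
open Pointwise

/-- The convolution kernel of the sinc-fractional Laplacian of order `s` on the grid of
mesh `1/N`: `Φ(j) = N^{2s}(2π)^{−d} ∫_{[−π,π]^d} ‖ω‖^{2s} e^{i⟨ω,j⟩} dω`. -/
noncomputable def sincKernel (d N : ℕ) (s : ℝ) (j : Fin d → ℤ) : ℂ :=
  (((N : ℝ) ^ (2 * s) : ℝ) : ℂ) * (((2 * Real.pi) ^ (-(d : ℝ)) : ℝ) : ℂ) *
    ∫ ω in {ω : EuclideanSpace ℝ (Fin d) | ∀ l, ω l ∈ Set.Icc (-Real.pi) Real.pi},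
      ((‖ω‖ ^ (2 * s) : ℝ) : ℂ) *
        Complex.exp (Complex.I * ((inner ℝ ω (intVec d j) : ℝ) : ℂ))

/-- The Dirichlet-type geometric sum `Y(x) = Σ_{m=−N}^{N−1} e^{imx}`. -/
noncomputable def dirichletY (N : ℕ) (x : ℝ) : ℂ :=
  ∑ m ∈ Finset.Icc (-(N : ℤ)) ((N : ℤ) - 1), Complex.exp (Complex.I * (m : ℂ) * (x : ℂ))

open Pointwise in
lemma smul_box_aux (d : ℕ) (a c : ℝ) (hc : 0 < c) :
    c • {ω : EuclideanSpace ℝ (Fin d) | ∀ l, ω l ∈ Set.Icc (-a) a}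
      = {ω : EuclideanSpace ℝ (Fin d) | ∀ l, ω l ∈ Set.Icc (-(c*a)) (c*a)} := by
  ext x
  rw [Set.mem_smul_set_iff_inv_smul_mem₀ hc.ne']
  simp only [Set.mem_setOf_eq, Set.mem_Icc]
  refine forall_congr' fun l => ?_
  have hx : (c⁻¹ • x) l = c⁻¹ * x l := rfl
  rw [hx]
  constructor
  · rintro ⟨h1, h2⟩
    constructor <;> nlinarith [mul_le_mul_of_nonneg_left h1 hc.le,
      mul_le_mul_of_nonneg_left h2 hc.le, mul_inv_cancel₀ hc.ne']
  · rintro ⟨h1, h2⟩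
    constructor <;> nlinarith [mul_le_mul_of_nonneg_left h1 (inv_nonneg.2 hc.le),
      mul_le_mul_of_nonneg_left h2 (inv_nonneg.2 hc.le), mul_inv_cancel₀ hc.ne']

lemma box_compact_aux (d : ℕ) (a : ℝ) :
    IsCompact {ω : EuclideanSpace ℝ (Fin d) | ∀ l, ω l ∈ Set.Icc (-a) a} := by
  have h : {ω : EuclideanSpace ℝ (Fin d) | ∀ l, ω l ∈ Set.Icc (-a) a}
      = (WithLp.toLp 2) '' Set.pi Set.univ (fun _ : Fin d => Set.Icc (-a) a) := by
    ext ω; constructor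
    · intro hω; exact ⟨WithLp.ofLp ω, Set.mem_univ_pi.2 hω, WithLp.toLp_ofLp (p := 2) ω⟩
    · rintro ⟨v, hv, rfl⟩; exact Set.mem_univ_pi.1 hv
  rw [h]
  exact (isCompact_univ_pi fun _ => isCompact_Icc).image (PiLp.continuous_toLp ..)

/-- The `(2N)^d`-point discrete Fourier transform of the sinc-fractional Laplacian kernel
has the single-integral representation
`Σ_j Φ(j) e^{−iπ⟨k,j⟩/N} = π^{2s}(2N)^{−d} ∫_{[−N,N]^d} ‖ω‖^{2s} Π_l Y((π/N)(ω_l − k_l)) dω`. -/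
theorem sinc_kernel_dft (d N : ℕ) (hd : 1 ≤ d) (hN : 1 ≤ N) (s : ℝ)
    (hs : s ∈ Set.Ioo (0 : ℝ) 1)
    (k : Fin d → ℤ) (hk : ∀ l, k l ∈ Finset.Icc (-(N : ℤ)) ((N : ℤ) - 1)) :
    (∑ j ∈ Fintype.piFinset (fun _ : Fin d => Finset.Icc (-(N : ℤ)) ((N : ℤ) - 1)),
        sincKernel d N s j *
          Complex.exp (-Complex.I *
            ((Real.pi * (∑ l, (k l : ℝ) * (j l : ℝ)) / N : ℝ) : ℂ)))
      = ((Real.pi ^ (2 * s) : ℝ) : ℂ) * (((2 * (N : ℝ)) ^ (-(d : ℝ)) : ℝ) : ℂ) *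
          ∫ ω in {ω : EuclideanSpace ℝ (Fin d) | ∀ l, ω l ∈ Set.Icc (-(N : ℝ)) (N : ℝ)},
            ((‖ω‖ ^ (2 * s) : ℝ) : ℂ) *
              ∏ l : Fin d, dirichletY N (Real.pi / N * (ω l - (k l : ℝ))) := by
  obtain ⟨hs0, -⟩ := hs
  have hNpos : (0:ℝ) < N := by exact_mod_cast hN
  have hπ := Real.pi_pos
  set c : ℝ := Real.pi / N with hc_def
  have hc : 0 < c := div_pos hπ hNpos
  set K := Fintype.piFinset (fun _ : Fin d => Finset.Icc (-(N : ℤ)) ((N : ℤ) - 1)) with hK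
  set Bπ : Set (EuclideanSpace ℝ (Fin d)) :=
    {ω | ∀ l, ω l ∈ Set.Icc (-Real.pi) Real.pi} with hBπ
  set BN : Set (EuclideanSpace ℝ (Fin d)) :=
    {ω | ∀ l, ω l ∈ Set.Icc (-(N:ℝ)) (N:ℝ)} with hBN
  set C : ℂ := (((N : ℝ) ^ (2 * s) : ℝ) : ℂ) * (((2 * Real.pi) ^ (-(d : ℝ)) : ℝ) : ℂ) with hC
  set F : (Fin d → ℤ) → EuclideanSpace ℝ (Fin d) → ℂ := fun j ω =>
    ((‖ω‖ ^ (2 * s) : ℝ) : ℂ) * Complex.exp (Complex.I * ((inner ℝ ω (intVec d j) : ℝ) : ℂ)) *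
      Complex.exp (-Complex.I * ((Real.pi * (∑ l, (k l : ℝ) * (j l : ℝ)) / N : ℝ) : ℂ)) with hF
  set G : EuclideanSpace ℝ (Fin d) → ℂ := fun ω =>
    ((‖ω‖ ^ (2 * s) : ℝ) : ℂ) * ∏ l : Fin d, dirichletY N (ω l - c * (k l : ℝ)) with hG
  -- integrability of each F j on Bπ
  have hFcont : ∀ j : Fin d → ℤ, Continuous (F j) := by
    intro j
    refine Continuous.mul (Continuous.mul ?_ ?_) continuous_const
    · exact Complex.continuous_ofReal.comp
        (continuous_norm.rpow_const fun x => Or.inr (by positivity))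
    · exact Complex.continuous_exp.comp (continuous_const.mul
        (Complex.continuous_ofReal.comp (continuous_id.inner continuous_const)))
  have hFint : ∀ j ∈ K, Integrable (F j) (volume.restrict Bπ) :=
    fun j _ => ((hFcont j).continuousOn).integrableOn_compact (box_compact_aux d Real.pi)
  -- pointwise identity
  have hpt : ∀ ω : EuclideanSpace ℝ (Fin d), (∑ j ∈ K, F j ω) = G ω := by
    intro ω
    have e1 : ∀ j : Fin d → ℤ,
        Complex.exp (Complex.I * ((inner ℝ ω (intVec d j) : ℝ) : ℂ)) *
          Complex.exp (-Complex.I * ((Real.pi * (∑ l, (k l : ℝ) * (j l : ℝ)) / N : ℝ) : ℂ))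
        = ∏ l : Fin d, Complex.exp (Complex.I * ((j l : ℤ) : ℂ) * ((ω l - c * (k l : ℝ) : ℝ) : ℂ)) := by
      intro j
      rw [← Complex.exp_sum, ← Complex.exp_add]
      congr 1
      have hinner : (inner ℝ ω (intVec d j) : ℝ) = ∑ l, ω l * (j l : ℝ) := by
        simp [PiLp.inner_apply, RCLike.inner_apply, intVec, mul_comm]
      rw [hinner, hc_def]
      push_cast
      simp only [Finset.mul_sum, Finset.sum_div]
      rw [← Finset.sum_add_distrib]
      refine Finset.sum_congr rfl fun l _ => ?_
      have hN0 : (N:ℂ) ≠ 0 := by exact_mod_cast hNpos.ne'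
      field_simp
      ring
    calc (∑ j ∈ K, F j ω)
        = ∑ j ∈ K, ((‖ω‖ ^ (2 * s) : ℝ) : ℂ) *
            ∏ l : Fin d, Complex.exp (Complex.I * ((j l : ℤ) : ℂ) * ((ω l - c * (k l : ℝ) : ℝ) : ℂ)) := by
          refine Finset.sum_congr rfl fun j _ => ?_
          rw [hF]
          simp only
          rw [mul_assoc, e1 j]
      _ = ((‖ω‖ ^ (2 * s) : ℝ) : ℂ) * ∑ j ∈ K,
            ∏ l : Fin d, Complex.exp (Complex.I * ((j l : ℤ) : ℂ) * ((ω l - c * (k l : ℝ) : ℝ) : ℂ)) := by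
          rw [Finset.mul_sum]
      _ = G ω := by
          have hps := Finset.prod_univ_sum (fun _ : Fin d => Finset.Icc (-(N:ℤ)) ((N:ℤ)-1))
            (fun l m => Complex.exp (Complex.I * (m : ℂ) * ((ω l - c * (k l : ℝ) : ℝ) : ℂ)))
          rw [hK, ← hps]
          rfl
  -- change of variables facts
  have hbox : c • BN = Bπ := by
    rw [hBN, hBπ, smul_box_aux d (N:ℝ) c hc]
    have : c * (N:ℝ) = Real.pi := by
      rw [hc_def]; field_simp
    rw [this]
  have hcv : ∫ x in c • BN, G x = (c ^ d) • ∫ x in BN, G (c • x) := by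
    have h := Measure.setIntegral_comp_smul_of_pos volume G BN hc
    rw [show Module.finrank ℝ (EuclideanSpace ℝ (Fin d)) = d by simp] at h
    rw [h, smul_smul, mul_inv_cancel₀ (pow_ne_zero _ hc.ne'), one_smul]
  have hGsm : ∀ u : EuclideanSpace ℝ (Fin d), G (c • u)
      = ((c ^ (2*s) : ℝ) : ℂ) * (((‖u‖ ^ (2 * s) : ℝ) : ℂ) *
          ∏ l : Fin d, dirichletY N (c * (u l - (k l : ℝ)))) := by
    intro u
    rw [hG]
    simp only
    have hnorm : ‖c • u‖ = c * ‖u‖ := by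
      rw [norm_smul, Real.norm_eq_abs, abs_of_pos hc]
    rw [hnorm, Real.mul_rpow hc.le (norm_nonneg u), Complex.ofReal_mul, mul_assoc]
    congr 1
    congr 1
    refine Finset.prod_congr rfl fun l _ => ?_
    have : (c • u) l = c * u l := rfl
    rw [this, ← mul_sub]
  -- constants
  have hconst : ((N:ℝ) ^ (2*s)) * ((2*Real.pi) ^ (-(d:ℝ))) * (c ^ d * c ^ (2*s))
      = Real.pi ^ (2*s) * ((2*(N:ℝ)) ^ (-(d:ℝ))) := by
    have h1 : ((N:ℝ)) ^ (2*s) * c ^ (2*s) = Real.pi ^ (2*s) := by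
      rw [hc_def, ← Real.mul_rpow hNpos.le (by positivity), mul_div_cancel₀ _ hNpos.ne']
    have h2 : ((2*Real.pi) ^ (-(d:ℝ))) * c ^ d = (2*(N:ℝ)) ^ (-(d:ℝ)) := by
      rw [hc_def, ← Real.rpow_natCast (Real.pi/N) d, Real.rpow_neg (by positivity),
        Real.rpow_neg (by positivity), ← Real.inv_rpow (by positivity),
        ← Real.inv_rpow (by positivity), ← Real.mul_rpow (by positivity) (by positivity)]
      congr 1
      field_simp
    calc ((N:ℝ) ^ (2*s)) * ((2*Real.pi) ^ (-(d:ℝ))) * (c ^ d * c ^ (2*s))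
        = (((N:ℝ)) ^ (2*s) * c ^ (2*s)) * (((2*Real.pi) ^ (-(d:ℝ))) * c ^ d) := by ring
      _ = _ := by rw [h1, h2]
  -- main calc
  calc (∑ j ∈ K, sincKernel d N s j *
          Complex.exp (-Complex.I * ((Real.pi * (∑ l, (k l : ℝ) * (j l : ℝ)) / N : ℝ) : ℂ)))
      = C * ∑ j ∈ K, ∫ ω in Bπ, F j ω := by
        rw [Finset.mul_sum]
        refine Finset.sum_congr rfl fun j _ => ?_
        rw [sincKernel, mul_assoc, ← integral_mul_const]
    _ = C * ∫ ω in Bπ, ∑ j ∈ K, F j ω := by rw [integral_finset_sum K hFint]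
    _ = C * ∫ ω in Bπ, G ω := by
        rw [integral_congr_ae (Eventually.of_forall fun ω => hpt ω)]
    _ = C * ((c ^ d) • ∫ u in BN, G (c • u)) := by rw [← hbox, hcv]
    _ = C * ((c ^ d) • (((c ^ (2*s) : ℝ) : ℂ) * ∫ u in BN, ((‖u‖ ^ (2 * s) : ℝ) : ℂ) *
          ∏ l : Fin d, dirichletY N (c * (u l - (k l : ℝ))))) := by
        rw [← integral_const_mul]
        congr 2
        exact integral_congr_ae (Eventually.of_forall fun u => hGsm u)
    _ = ((Real.pi ^ (2 * s) : ℝ) : ℂ) * (((2 * (N : ℝ)) ^ (-(d : ℝ)) : ℝ) : ℂ) *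
          ∫ ω in BN, ((‖ω‖ ^ (2 * s) : ℝ) : ℂ) *
            ∏ l : Fin d, dirichletY N (c * (ω l - (k l : ℝ))) := by
        rw [hC, Complex.real_smul]
        have h := congrArg (fun x : ℝ => (x : ℂ)) hconst
        push_cast at h
        push_cast
        set T := ∫ ω in BN, ((‖ω‖ ^ (2 * s) : ℝ) : ℂ) *
            ∏ l : Fin d, dirichletY N (c * (ω l - (k l : ℝ)))
        linear_combination T * h
end

section
/- Let d ≥ 1 and N ≥ 1 be integers, s ∈ (0,1), and K ∈ ℤ^d. Then, as the integer m → ∞, (2π)^{2s}·N^{−d}·(2m)^{−(d+2s)} · Σ_{j ∈ {−mN, …, mN−1}^d} ‖j‖^{2s} · e^{2πi⟨j, K⟩/(2mN)} converges to (2πN)^{−d} · ∫_{[−Nπ, Nπ]^d} ‖ω‖^{2s} · e^{i⟨ω, K⟩/N} dω. -/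
open MeasureTheory Filter Complex Set Topology

namespace PKTSK

/-- The grid rounding map with mesh `h`. -/
noncomputable def grid (d : ℕ) (h : ℝ) (x : EuclideanSpace ℝ (Fin d)) :
    EuclideanSpace ℝ (Fin d) :=
  WithLp.toLp 2 (fun i => h * ⌊x i / h⌋)

variable {d : ℕ}

/-- Volume transfer from `EuclideanSpace ℝ (Fin d)` to the pi type. -/
lemma volE (S : Set (Fin d → ℝ)) (hS : MeasurableSet S) :
    (volume : Measure (EuclideanSpace ℝ (Fin d))) (WithLp.ofLp ⁻¹' S) = volume S :=
  (PiLp.volume_preserving_ofLp (Fin d)).measure_preimage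
    hS.nullMeasurableSet

lemma box_eq (A : Fin d → Set ℝ) :
    {x : EuclideanSpace ℝ (Fin d) | ∀ i, x i ∈ A i} = WithLp.ofLp ⁻¹' Set.pi univ A := by
  ext x
  exact ⟨fun h i _ => h i, fun h i => h i (mem_univ i)⟩

lemma measurableSet_box {A : Fin d → Set ℝ} (hA : ∀ i, MeasurableSet (A i)) :
    MeasurableSet {x : EuclideanSpace ℝ (Fin d) | ∀ i, x i ∈ A i} := by
  rw [box_eq]; exact (MeasurableSet.univ_pi hA).preimage (WithLp.measurable_ofLp 2 _)

lemma vol_box (a b : Fin d → ℝ) :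
    (volume : Measure (EuclideanSpace ℝ (Fin d)))
        {x : EuclideanSpace ℝ (Fin d) | ∀ i, x i ∈ Ico (a i) (b i)}
      = ∏ i, ENNReal.ofReal (b i - a i) := by
  rw [box_eq, volE _ (MeasurableSet.univ_pi fun _ => measurableSet_Ico), volume_pi_pi]
  simp [Real.volume_Ico]

lemma box_ae_eq (a b : Fin d → ℝ) :
    ({x : EuclideanSpace ℝ (Fin d) | ∀ i, x i ∈ Icc (a i) (b i)} : Set _)
      =ᵐ[volume] {x : EuclideanSpace ℝ (Fin d) | ∀ i, x i ∈ Ico (a i) (b i)} := by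
  rw [box_eq, box_eq]
  rw [MeasureTheory.ae_eq_set]
  have h1 : MeasurableSet (Set.pi (univ : Set (Fin d)) fun i => Icc (a i) (b i)) :=
    MeasurableSet.univ_pi fun _ => measurableSet_Icc
  have h2 : MeasurableSet (Set.pi (univ : Set (Fin d)) fun i => Ico (a i) (b i)) :=
    MeasurableSet.univ_pi fun _ => measurableSet_Ico
  have hpi : ((Set.pi univ fun i => Ico (a i) (b i)) : Set (Fin d → ℝ))
      =ᵐ[volume] (Set.pi univ fun i => Icc (a i) (b i)) :=
    MeasureTheory.Measure.pi_Ico_ae_eq_pi_Icc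
  rw [MeasureTheory.ae_eq_set] at hpi
  constructor
  · rw [← Set.preimage_diff, volE _ (h1.diff h2)]; exact hpi.2
  · rw [← Set.preimage_diff, volE _ (h2.diff h1)]; exact hpi.1

/-- 1D cell membership via floor. -/
lemma mem_Ico_iff_floor {h : ℝ} (hh : 0 < h) {y : ℝ} {z : ℤ} :
    y ∈ Ico (h * z) (h * (z + 1)) ↔ ⌊y / h⌋ = z := by
  rw [mem_Ico, Int.floor_eq_iff]
  constructor
  · rintro ⟨h1, h2⟩
    constructor
    · rw [le_div_iff₀ hh]; linarith
    · rw [div_lt_iff₀ hh]; push_cast; linarith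
  · rintro ⟨h1, h2⟩
    rw [le_div_iff₀ hh] at h1
    rw [div_lt_iff₀ hh] at h2
    push_cast at h2
    constructor <;> linarith


lemma grid_close {h : ℝ} (hh : 0 < h) (y : ℝ) : |h * ⌊y / h⌋ - y| ≤ h := by
  have h1 : h * ⌊y / h⌋ ≤ y := by
    have := mul_le_mul_of_nonneg_left (Int.floor_le (y / h)) hh.le
    rwa [mul_div_cancel₀ _ hh.ne'] at this
  have h2 : y < h * ⌊y / h⌋ + h := by
    have := mul_lt_mul_of_pos_left (Int.lt_floor_add_one (y / h)) hh
    rw [mul_add, mul_one, mul_div_cancel₀ _ hh.ne'] at this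
    linarith
  rw [abs_le]; constructor <;> linarith

lemma norm_le_of_coords {x : EuclideanSpace ℝ (Fin d)} {a : ℝ} (ha : 0 ≤ a)
    (hx : ∀ i, |x i| ≤ a) : ‖x‖ ≤ Real.sqrt d * a := by
  rw [EuclideanSpace.norm_eq]
  have : ∑ i, ‖x i‖ ^ 2 ≤ ∑ _i : Fin d, a ^ 2 := by
    refine Finset.sum_le_sum fun i _ => ?_
    rw [Real.norm_eq_abs]
    exact pow_le_pow_left₀ (abs_nonneg _) (hx i) 2
  calc Real.sqrt (∑ i, ‖x i‖ ^ 2) ≤ Real.sqrt (∑ _i : Fin d, a ^ 2) :=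
        Real.sqrt_le_sqrt this
    _ = Real.sqrt d * a := by
        rw [Finset.sum_const, Finset.card_univ, Fintype.card_fin, nsmul_eq_mul,
          Real.sqrt_mul (by positivity), Real.sqrt_sq ha]

lemma box_eq_biUnion {h : ℝ} (hh : 0 < h) (M : ℤ) :
    {x : EuclideanSpace ℝ (Fin d) | ∀ i, x i ∈ Ico (-(h * M)) (h * M)}
      = ⋃ j ∈ Fintype.piFinset (fun _ : Fin d => Finset.Icc (-M) (M - 1)),
          {x : EuclideanSpace ℝ (Fin d) | ∀ i, x i ∈ Ico (h * j i) (h * (j i + 1))} := by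
  ext x
  simp only [Set.mem_iUnion, Set.mem_setOf_eq, Fintype.mem_piFinset, Finset.mem_Icc,
    exists_prop]
  constructor
  · intro hx
    refine ⟨fun i => ⌊x i / h⌋, fun i => ?_, fun i => (mem_Ico_iff_floor hh).2 rfl⟩
    obtain ⟨h1, h2⟩ := hx i
    constructor
    · rw [Int.le_floor, le_div_iff₀ hh]; push_cast; linarith
    · have : ⌊x i / h⌋ < M := by
        rw [Int.floor_lt, div_lt_iff₀ hh]; linarith
      simp only []
      omega
  · rintro ⟨j, hj, hx⟩ i
    obtain ⟨h1, h2⟩ := hx i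
    obtain ⟨hj1, hj2⟩ := hj i
    have c1 : ((-M : ℤ) : ℝ) ≤ (j i : ℝ) := by exact_mod_cast hj1
    have c2 : ((j i : ℤ) : ℝ) + 1 ≤ (M : ℝ) := by exact_mod_cast by omega
    push_cast at c1
    constructor
    · nlinarith
    · nlinarith

lemma cells_disjoint {h : ℝ} (hh : 0 < h) (M : ℤ) :
    Set.Pairwise ↑(Fintype.piFinset (fun _ : Fin d => Finset.Icc (-M) (M - 1)))
      (Function.onFun Disjoint fun j : Fin d → ℤ =>
        {x : EuclideanSpace ℝ (Fin d) | ∀ i, x i ∈ Ico (h * j i) (h * (j i + 1))}) := by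
  intro j _ j' _ hne
  rw [Function.onFun, Set.disjoint_left]
  intro x hx hx'
  apply hne
  funext i
  have e1 := (mem_Ico_iff_floor hh).1 (hx i)
  have e2 := (mem_Ico_iff_floor hh).1 (hx' i)
  rw [← e1, e2]

lemma vol_cell {h : ℝ} (hh : 0 < h) (j : Fin d → ℤ) :
    (volume : Measure (EuclideanSpace ℝ (Fin d)))
        {x : EuclideanSpace ℝ (Fin d) | ∀ i, x i ∈ Ico (h * j i) (h * (j i + 1))}
      = ENNReal.ofReal h ^ d := by
  rw [vol_box]
  have : ∀ i : Fin d, h * (j i + 1) - h * j i = h := fun i => by ring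
  simp [this]

lemma step_integral (f : EuclideanSpace ℝ (Fin d) → ℂ) (hf : Continuous f)
    {h : ℝ} (hh : 0 < h) (M : ℤ) :
    (∫ x in {x : EuclideanSpace ℝ (Fin d) | ∀ i, x i ∈ Ico (-(h * M)) (h * M)},
        f (grid d h x))
      = ∑ j ∈ Fintype.piFinset (fun _ : Fin d => Finset.Icc (-M) (M - 1)),
          ((h ^ d : ℝ) : ℂ) * f (WithLp.toLp 2 (fun i => h * (j i : ℝ))) := by
  have measCell : ∀ j : Fin d → ℤ, MeasurableSet
      {x : EuclideanSpace ℝ (Fin d) | ∀ i, x i ∈ Ico (h * j i) (h * (j i + 1))} :=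
    fun j => measurableSet_box fun i => measurableSet_Ico
  have volCell_lt : ∀ j : Fin d → ℤ, (volume : Measure (EuclideanSpace ℝ (Fin d)))
      {x : EuclideanSpace ℝ (Fin d) | ∀ i, x i ∈ Ico (h * j i) (h * (j i + 1))} < ⊤ := by
    intro j
    rw [vol_cell hh]
    exact ENNReal.pow_lt_top ENNReal.ofReal_lt_top
  have stepConst : ∀ j : Fin d → ℤ, ∀ x ∈
      {x : EuclideanSpace ℝ (Fin d) | ∀ i, x i ∈ Ico (h * j i) (h * (j i + 1))},
      f (grid d h x)
        = f (WithLp.toLp 2 (fun i => h * (j i : ℝ))) := by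
    intro j x hx
    congr 1
    unfold grid
    congr 1
    funext i
    show h * ⌊x i / h⌋ = h * (j i : ℝ)
    rw [(mem_Ico_iff_floor hh).1 (hx i)]
  rw [box_eq_biUnion hh M, integral_biUnion_finset _ (fun j _ => measCell j)
    (cells_disjoint hh M)]
  · refine Finset.sum_congr rfl fun j _ => ?_
    rw [setIntegral_congr_fun (measCell j) (stepConst j), setIntegral_const, measureReal_def, vol_cell hh,
      ENNReal.toReal_pow, ENNReal.toReal_ofReal hh.le]
    push_cast
    rw [Complex.real_smul]
    push_cast
    ring
  · intro j _
    have hc : IntegrableOn (fun _ => f (WithLp.toLp 2 (fun i => h * (j i : ℝ))))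
        {x : EuclideanSpace ℝ (Fin d) | ∀ i, x i ∈ Ico (h * j i) (h * (j i + 1))} volume :=
      integrableOn_const (volCell_lt j).ne
    exact hc.congr_fun (fun x hx => (stepConst j x hx).symm) (measCell j)


lemma const_id (d : ℕ) {m N : ℕ} (hm : 1 ≤ m) (hN : 1 ≤ N) (s : ℝ) :
    (2 * Real.pi) ^ (2 * s) * (N : ℝ) ^ (-(d : ℝ)) * (2 * (m : ℝ)) ^ (-((d : ℝ) + 2 * s))
      = (2 * Real.pi * N) ^ (-(d : ℝ)) * (Real.pi / m) ^ (d : ℕ)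
          * (Real.pi / m) ^ (2 * s) := by
  have pi0 := Real.pi_pos
  have hm0 : (0 : ℝ) < m := by exact_mod_cast hm
  have hN0 : (0 : ℝ) < N := by exact_mod_cast hN
  rw [← Real.rpow_natCast (Real.pi / m) d]
  rw [Real.rpow_def_of_pos (by positivity), Real.rpow_def_of_pos (by positivity),
    Real.rpow_def_of_pos (by positivity), Real.rpow_def_of_pos (by positivity),
    Real.rpow_def_of_pos (by positivity), Real.rpow_def_of_pos (by positivity),
    ← Real.exp_add, ← Real.exp_add, ← Real.exp_add, ← Real.exp_add, Real.exp_eq_exp,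
    Real.log_mul (by positivity) hN0.ne', Real.log_mul two_ne_zero pi0.ne',
    Real.log_div pi0.ne' hm0.ne', Real.log_mul two_ne_zero hm0.ne']
  ring

lemma grid_sub_coord (h : ℝ) (x : EuclideanSpace ℝ (Fin d)) (i : Fin d) :
    (grid d h x - x) i = h * ⌊x i / h⌋ - x i := by
  rw [WithLp.ofLp_sub, Pi.sub_apply]; rfl

lemma tendsto_grid (x : EuclideanSpace ℝ (Fin d)) :
    Tendsto (fun m : ℕ => grid d (Real.pi / m) x) atTop (𝓝 x) := by
  have key : Tendsto (fun m : ℕ => grid d (Real.pi / m) x - x)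
      atTop (𝓝 (0 : EuclideanSpace ℝ (Fin d))) := by
    apply squeeze_zero_norm' (a := fun m : ℕ => Real.sqrt d * (Real.pi / m))
    · filter_upwards [eventually_ge_atTop 1] with m hm
      have hm0 : (0 : ℝ) < m := by exact_mod_cast hm
      have hh0 : (0 : ℝ) < Real.pi / m := by positivity
      apply norm_le_of_coords hh0.le
      intro i
      rw [grid_sub_coord]
      exact grid_close hh0 (x i)
    · have h1 := tendsto_const_div_atTop_nhds_zero_nat Real.pi
      have h2 := h1.const_mul (Real.sqrt d)
      simpa using h2
  have key2 := key.add_const x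
  simpa using key2

lemma grid_measurable (h : ℝ) :
    Measurable (fun x : EuclideanSpace ℝ (Fin d) => grid d h x) := by
  refine (WithLp.measurable_toLp 2 (Fin d → ℝ)).comp
    (f := fun x : EuclideanSpace ℝ (Fin d) => fun i => h * (⌊x i / h⌋ : ℝ)) ?_
  apply measurable_pi_lambda
  intro i
  have hxi : Measurable fun x : EuclideanSpace ℝ (Fin d) => x i :=
    (measurable_pi_apply i).comp (WithLp.measurable_ofLp 2 _)
  have h0 : Measurable fun x : EuclideanSpace ℝ (Fin d) => x i / h := hxi.div_const h
  exact (measurable_from_top.comp h0.floor).const_mul h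


lemma vol_box_const (a b : ℝ) :
    (volume : Measure (EuclideanSpace ℝ (Fin d))) {x | ∀ i, x i ∈ Ico a b}
      = ENNReal.ofReal (b - a) ^ d := by
  have h := vol_box (fun _ : Fin d => a) (fun _ : Fin d => b)
  simpa using h

lemma box_ae_eq_const (a b : ℝ) :
    ({x : EuclideanSpace ℝ (Fin d) | ∀ i, x i ∈ Icc a b} : Set _)
      =ᵐ[volume] {x : EuclideanSpace ℝ (Fin d) | ∀ i, x i ∈ Ico a b} :=
  box_ae_eq (fun _ : Fin d => a) (fun _ : Fin d => b)

end PKTSK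

open PKTSK in
/-- As `m → ∞`, the convolution kernel of the discrete scaled periodic fractional
Laplacian of order `s` with scale factor `S = 2m` on a grid of mesh `1/N` converges to
the convolution kernel `Φ^N(K)` of the sinc-fractional Laplacian:
`(2π)^{2s} N^{−d} (2m)^{−(d+2s)} Σ_{j∈{−mN,…,mN−1}^d} ‖j‖^{2s} e^{2πi⟨j,K⟩/(2mN)}
  → (2πN)^{−d} ∫_{[−Nπ,Nπ]^d} ‖ω‖^{2s} e^{i⟨ω,K⟩/N} dω`. -/
theorem periodic_kernel_tendsto_sinc_kernel (d N : ℕ) (hd : 1 ≤ d) (hN : 1 ≤ N) (s : ℝ)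
    (hs : s ∈ Set.Ioo (0 : ℝ) 1) (K : Fin d → ℤ) :
    Tendsto
      (fun m : ℕ =>
        (((2 * Real.pi) ^ (2 * s) : ℝ) : ℂ) * (((N : ℝ) ^ (-(d : ℝ)) : ℝ) : ℂ) *
          (((2 * (m : ℝ)) ^ (-((d : ℝ) + 2 * s)) : ℝ) : ℂ) *
          ∑ j ∈ Fintype.piFinset
              (fun _ : Fin d => Finset.Icc (-((m : ℤ) * N)) ((m : ℤ) * N - 1)),
            ((‖intVec d j‖ ^ (2 * s) : ℝ) : ℂ) *
              Complex.exp (2 * Real.pi * Complex.I *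
                (((inner ℝ (intVec d j) (intVec d K) : ℝ) / (2 * m * N) : ℝ) : ℂ)))
      atTop
      (nhds
        ((((2 * Real.pi * N) ^ (-(d : ℝ)) : ℝ) : ℂ) *
          ∫ ω in {ω : EuclideanSpace ℝ (Fin d) |
              ∀ l, ω l ∈ Set.Icc (-((N : ℝ) * Real.pi)) ((N : ℝ) * Real.pi)},
            ((‖ω‖ ^ (2 * s) : ℝ) : ℂ) *
              Complex.exp (Complex.I *
                (((inner ℝ ω (intVec d K) : ℝ) / N : ℝ) : ℂ)))) := by
  obtain ⟨hs0, _hs1⟩ := hs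
  have pi0 := Real.pi_pos
  have hN0 : (0 : ℝ) < N := by exact_mod_cast hN
  set f : EuclideanSpace ℝ (Fin d) → ℂ := fun ω =>
    ((‖ω‖ ^ (2 * s) : ℝ) : ℂ) *
      Complex.exp (Complex.I * (((inner ℝ ω (intVec d K) : ℝ) / N : ℝ) : ℂ)) with hfdef
  have hf : Continuous f := by
    rw [hfdef]
    apply Continuous.mul
    · exact Complex.continuous_ofReal.comp
        ((Real.continuous_rpow_const (by linarith)).comp continuous_norm)
    · apply Complex.continuous_exp.comp
      apply Continuous.mul continuous_const
      apply Complex.continuous_ofReal.comp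
      exact (Continuous.inner continuous_id continuous_const).div_const _
  set Bco : Set (EuclideanSpace ℝ (Fin d)) :=
    {x | ∀ i, x i ∈ Set.Ico (-((N : ℝ) * Real.pi)) ((N : ℝ) * Real.pi)} with hBdef
  have hBmeas : MeasurableSet Bco := measurableSet_box fun _ => measurableSet_Ico
  have hBvol : volume Bco < ⊤ := by
    have h1 : volume Bco
        = ENNReal.ofReal ((N : ℝ) * Real.pi - -((N : ℝ) * Real.pi)) ^ d :=
      vol_box_const _ _
    rw [h1]
    exact ENNReal.pow_lt_top ENNReal.ofReal_lt_top
  -- uniform bound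
  have hbound : ∀ (m : ℕ), ∀ x ∈ Bco, ‖f (grid d (Real.pi / m) x)‖
      ≤ (Real.sqrt d * ((N : ℝ) * Real.pi + Real.pi)) ^ (2 * s) := by
    intro m x hx
    have hcoord : ∀ i, |grid d (Real.pi / m) x i| ≤ (N : ℝ) * Real.pi + Real.pi := by
      intro i
      have hxi : |x i| ≤ (N : ℝ) * Real.pi := by
        have h2 := hx i
        rw [Set.mem_Ico] at h2
        rw [abs_le]
        exact ⟨h2.1, h2.2.le⟩
      rcases Nat.eq_zero_or_pos m with rfl | hm
      · have h0 : grid d (Real.pi / (0 : ℕ)) x i = 0 := by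
          show Real.pi / ((0 : ℕ) : ℝ) * ⌊x i / (Real.pi / ((0 : ℕ) : ℝ))⌋ = 0
          norm_num
        rw [h0, abs_zero]
        positivity
      · have hm1 : (1 : ℝ) ≤ m := by exact_mod_cast hm
        have hm0 : (0 : ℝ) < m := by linarith
        have hh0 : (0 : ℝ) < Real.pi / m := by positivity
        have h1 : |grid d (Real.pi / m) x i - x i| ≤ Real.pi / m :=
          grid_close hh0 (x i)
        have h3 : Real.pi / m ≤ Real.pi := by
          rw [div_le_iff₀ hm0]
          nlinarith
        have e1 : grid d (Real.pi / m) x i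
            = (grid d (Real.pi / m) x i - x i) + x i := by ring
        rw [e1]
        refine le_trans (abs_add_le _ _) ?_
        linarith
    have hnorm : ‖grid d (Real.pi / m) x‖ ≤ Real.sqrt d * ((N : ℝ) * Real.pi + Real.pi) :=
      norm_le_of_coords (by positivity) hcoord
    rw [hfdef]
    simp only []
    rw [norm_mul]
    have hexp1 : ‖Complex.exp (Complex.I *
        (((inner ℝ (grid d (Real.pi / m) x) (intVec d K) : ℝ) / N : ℝ) : ℂ))‖ = 1 := by
      rw [Complex.norm_exp]
      simp [Complex.mul_re]
    rw [hexp1, mul_one, Complex.norm_real, Real.norm_eq_abs,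
      _root_.abs_of_nonneg (Real.rpow_nonneg (norm_nonneg _) _)]
    exact Real.rpow_le_rpow (norm_nonneg _) hnorm (by linarith)
  -- dominated convergence
  have mainT : Tendsto (fun m : ℕ => ∫ x in Bco, f (grid d (Real.pi / m) x)) atTop
      (𝓝 (∫ x in Bco, f x)) := by
    refine tendsto_integral_of_dominated_convergence
      (fun _ => (Real.sqrt d * ((N : ℝ) * Real.pi + Real.pi)) ^ (2 * s)) ?_ ?_ ?_ ?_
    · intro m
      exact ((hf.measurable).comp (grid_measurable (Real.pi / m))).aestronglyMeasurable
    · exact integrableOn_const hBvol.ne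
    · intro m
      rw [ae_restrict_iff' hBmeas]
      exact ae_of_all _ (hbound m)
    · exact ae_of_all _ fun x => (hf.tendsto x).comp (tendsto_grid x)
  set c : ℝ := (2 * Real.pi * (N : ℝ)) ^ (-(d : ℝ)) with hcdef
  have T2 := mainT.const_mul ((c : ℂ))
  have hIcc : (∫ ω in {ω : EuclideanSpace ℝ (Fin d) |
        ∀ l, ω l ∈ Set.Icc (-((N : ℝ) * Real.pi)) ((N : ℝ) * Real.pi)}, f ω)
      = ∫ x in Bco, f x :=
    setIntegral_congr_set (box_ae_eq_const _ _)
  rw [hIcc]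
  refine Tendsto.congr' ?_ T2
  filter_upwards [eventually_ge_atTop 1] with m hm
  have hm1 : (1 : ℝ) ≤ m := by exact_mod_cast hm
  have hm0 : (0 : ℝ) < m := by linarith
  have hh0 : (0 : ℝ) < Real.pi / m := by positivity
  set M : ℤ := (m : ℤ) * (N : ℤ) with hMdef
  have hMr : Real.pi / m * ((M : ℤ) : ℝ) = (N : ℝ) * Real.pi := by
    rw [hMdef]
    push_cast
    field_simp
  have hbox : Bco = {x : EuclideanSpace ℝ (Fin d) |
      ∀ i, x i ∈ Set.Ico (-(Real.pi / m * ((M : ℤ) : ℝ))) (Real.pi / m * ((M : ℤ) : ℝ))} := by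
    rw [hBdef, hMr]
  rw [hbox, step_integral f hf hh0 M, Finset.mul_sum, Finset.mul_sum]
  refine Finset.sum_congr rfl fun j hj => ?_
  have hgp : (WithLp.toLp 2 (fun i => Real.pi / m * ((j i : ℤ) : ℝ)))
      = (Real.pi / m) • intVec d j := by ext i; simp [intVec]
  have hnormj : ‖(Real.pi / m) • intVec d j‖ = Real.pi / m * ‖intVec d j‖ := by
    rw [norm_smul, Real.norm_eq_abs, abs_of_pos hh0]
  have hinnerj : (inner ℝ ((Real.pi / m) • intVec d j) (intVec d K) : ℝ)
      = Real.pi / m * (inner ℝ (intVec d j) (intVec d K) : ℝ) :=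
    real_inner_smul_left _ _ _
  have hmC : (m : ℂ) ≠ 0 := by exact_mod_cast hm0.ne'
  have hNC : (N : ℂ) ≠ 0 := by exact_mod_cast hN0.ne'
  have hfval : f (WithLp.toLp 2 (fun i => Real.pi / m * ((j i : ℤ) : ℝ)))
      = (((Real.pi / m) ^ (2 * s) : ℝ) : ℂ) * ((‖intVec d j‖ ^ (2 * s) : ℝ) : ℂ) *
        Complex.exp (2 * Real.pi * Complex.I *
          (((inner ℝ (intVec d j) (intVec d K) : ℝ) / (2 * m * N) : ℝ) : ℂ)) := by
    rw [hfdef]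
    simp only []
    rw [hgp, hnormj, hinnerj, Real.mul_rpow hh0.le (norm_nonneg _), Complex.ofReal_mul]
    congr 1
    congr 1
    push_cast
    field_simp
  rw [hfval]
  have hconst : ((((2 * Real.pi) ^ (2 * s) : ℝ)) : ℂ) * (((N : ℝ) ^ (-(d : ℝ)) : ℝ) : ℂ) *
        (((2 * (m : ℝ)) ^ (-((d : ℝ) + 2 * s)) : ℝ) : ℂ)
      = ((c : ℝ) : ℂ) * (((Real.pi / m) ^ d : ℝ) : ℂ) * (((Real.pi / m) ^ (2 * s) : ℝ) : ℂ) := by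
    rw [← Complex.ofReal_mul, ← Complex.ofReal_mul, ← Complex.ofReal_mul,
      ← Complex.ofReal_mul]
    refine Complex.ofReal_inj.2 ?_
    rw [hcdef]
    exact const_id d hm hN s
  linear_combination ((‖intVec d j‖ ^ (2 * s) : ℝ) : ℂ) *
    Complex.exp (2 * Real.pi * Complex.I *
      (((inner ℝ (intVec d j) (intVec d K) : ℝ) / (2 * m * N) : ℝ) : ℂ)) * hconst.symm
end

section
/- Let d ≥ 1 and N ≥ 1 be integers and s ∈ (0,1). Let (u_k)_{k ∈ {0,…,N−1}^d} be any family of real numbers. Then for every κ ∈ {0,…,N−1}^d, as the integer m → ∞ (with S = 2m), S^{−2s} · (2π)^{2s}·(SN)^{−d} · Σ_{k ∈ {0,…,N−1}^d} u_k · Σ_{j ∈ {−SN/2, …, SN/2 − 1}^d} ‖j‖^{2s} · e^{2πi⟨j, κ − k⟩/(SN)} converges to Σ_{k ∈ {0,…,N−1}^d} u_k · (2πN)^{−d} · ∫_{[−Nπ, Nπ]^d} ‖ω‖^{2s} · e^{i⟨ω, κ − k⟩/N} dω. -/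
open MeasureTheory Filter Complex

lemma boxSet_eq (d : ℕ) (t : Fin d → Set ℝ) :
    {ω : EuclideanSpace ℝ (Fin d) | ∀ i, ω i ∈ t i}
      = (MeasurableEquiv.toLp 2 (Fin d → ℝ)).symm ⁻¹' (Set.univ.pi t) := by
  ext ω; simp [Set.mem_pi, MeasurableEquiv.coe_toLp_symm]

lemma measurableSet_boxSet (d : ℕ) (t : Fin d → Set ℝ) (ht : ∀ i, MeasurableSet (t i)) :
    MeasurableSet {ω : EuclideanSpace ℝ (Fin d) | ∀ i, ω i ∈ t i} := by
  rw [boxSet_eq]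
  exact (MeasurableEquiv.toLp 2 (Fin d → ℝ)).symm.measurable (MeasurableSet.univ_pi ht)

lemma volume_boxSet (d : ℕ) (t : Fin d → Set ℝ) (ht : ∀ i, MeasurableSet (t i)) :
    volume {ω : EuclideanSpace ℝ (Fin d) | ∀ i, ω i ∈ t i} = ∏ i, volume (t i) := by
  rw [boxSet_eq,
    (EuclideanSpace.volume_preserving_symm_measurableEquiv_toLp (Fin d)).measure_preimage
      (MeasurableSet.univ_pi ht).nullMeasurableSet]
  exact MeasureTheory.volume_pi_pi t

lemma coord_iff (m : ℕ) (hm : 1 ≤ m) (a : ℤ) (x : ℝ) :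
    x ∈ Set.Ico (Real.pi * a / m) (Real.pi * (a + 1) / m) ↔ ⌊(m : ℝ) * x / Real.pi⌋ = a := by
  have hm' : (0:ℝ) < m := by exact_mod_cast hm
  have hπ := Real.pi_pos
  rw [Int.floor_eq_iff, Set.mem_Ico]
  constructor
  · rintro ⟨h1, h2⟩
    constructor
    · rw [le_div_iff₀ hπ]
      rw [div_le_iff₀ hm'] at h1
      nlinarith
    · rw [div_lt_iff₀ hπ]
      rw [lt_div_iff₀ hm'] at h2
      nlinarith
  · rintro ⟨h1, h2⟩
    rw [le_div_iff₀ hπ] at h1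
    rw [div_lt_iff₀ hπ] at h2
    constructor
    · rw [div_le_iff₀ hm']; nlinarith
    · rw [lt_div_iff₀ hm']; nlinarith

lemma floor_coord_bound (m : ℕ) (hm : 1 ≤ m) (c : ℝ) :
    |Real.pi * ⌊(m : ℝ) * c / Real.pi⌋ / m - c| ≤ Real.pi / m := by
  have hm' : (0:ℝ) < m := by exact_mod_cast hm
  have hπ := Real.pi_pos
  have h1 : (⌊(m : ℝ) * c / Real.pi⌋ : ℝ) ≤ (m : ℝ) * c / Real.pi := Int.floor_le _
  have h2 : (m : ℝ) * c / Real.pi < ⌊(m : ℝ) * c / Real.pi⌋ + 1 := Int.lt_floor_add_one _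
  rw [div_lt_iff₀ hπ] at h2
  rw [le_div_iff₀ hπ] at h1
  rw [abs_le]
  have e1 : Real.pi * ↑⌊(m : ℝ) * c / Real.pi⌋ / m - c
      = (Real.pi * ↑⌊(m : ℝ) * c / Real.pi⌋ - c * m) / m := by
    field_simp
  rw [e1, neg_le, ← neg_div, div_le_div_iff_of_pos_right hm', div_le_div_iff_of_pos_right hm']
  constructor <;> nlinarith

lemma norm_le_of_coord (d : ℕ) (x : EuclideanSpace ℝ (Fin d)) (M : ℝ) (hM : 0 ≤ M)
    (h : ∀ i, |x i| ≤ M) : ‖x‖ ≤ Real.sqrt d * M := by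
  rw [EuclideanSpace.norm_eq]
  have h2 : ∑ i, ‖x i‖ ^ 2 ≤ (d : ℝ) * M ^ 2 := by
    calc ∑ i, ‖x i‖ ^ 2 ≤ ∑ _i : Fin d, M ^ 2 := by
          refine Finset.sum_le_sum fun i _ => ?_
          rw [Real.norm_eq_abs]
          exact pow_le_pow_left₀ (abs_nonneg _) (h i) 2
      _ = (d : ℝ) * M ^ 2 := by simp [Finset.sum_const, mul_comm]
  calc Real.sqrt (∑ i, ‖x i‖ ^ 2) ≤ Real.sqrt ((d : ℝ) * M ^ 2) := Real.sqrt_le_sqrt h2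
    _ = Real.sqrt d * M := by
        rw [Real.sqrt_mul (by positivity), Real.sqrt_sq hM]

lemma riemann_main (d N : ℕ) (hN : 1 ≤ N) (f : EuclideanSpace ℝ (Fin d) → ℂ)
    (hf : Continuous f) (C : ℝ)
    (hC : ∀ x : EuclideanSpace ℝ (Fin d), (∀ i, |x i| ≤ ((N : ℝ) + 1) * Real.pi) → ‖f x‖ ≤ C) :
    Filter.Tendsto (fun m : ℕ =>
        ∑ j ∈ Fintype.piFinset (fun _ : Fin d => Finset.Icc (-((m : ℤ) * N)) ((m : ℤ) * N - 1)),
          (((Real.pi / m) ^ d : ℝ) : ℂ) * f ((Real.pi / (m : ℝ)) • intVec d j)) atTop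
      (nhds (∫ ω in {ω : EuclideanSpace ℝ (Fin d) |
          ∀ l, ω l ∈ Set.Icc (-((N : ℝ) * Real.pi)) ((N : ℝ) * Real.pi)}, f ω)) := by
  have hπ := Real.pi_pos
  set box' : Set (EuclideanSpace ℝ (Fin d)) :=
    {ω | ∀ i, ω i ∈ Set.Ico (-((N : ℝ) * Real.pi)) ((N : ℝ) * Real.pi)} with hbox'
  have hbox'meas : MeasurableSet box' := measurableSet_boxSet _ _ (fun _ => measurableSet_Ico)
  have hboxmeas : MeasurableSet {ω : EuclideanSpace ℝ (Fin d) |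
      ∀ l, ω l ∈ Set.Icc (-((N : ℝ) * Real.pi)) ((N : ℝ) * Real.pi)} :=
    measurableSet_boxSet _ _ (fun _ => measurableSet_Icc)
  have hvol' : volume box' = ENNReal.ofReal (2 * N * Real.pi) ^ d := by
    rw [hbox', volume_boxSet _ _ (fun _ => measurableSet_Ico)]
    simp only [Real.volume_Ico, sub_neg_eq_add, Finset.prod_const, Finset.card_univ,
      Fintype.card_fin]
    congr 2; ring
  have hvolIcc : volume {ω : EuclideanSpace ℝ (Fin d) |
      ∀ l, ω l ∈ Set.Icc (-((N : ℝ) * Real.pi)) ((N : ℝ) * Real.pi)}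
      = ENNReal.ofReal (2 * N * Real.pi) ^ d := by
    rw [volume_boxSet _ _ (fun _ => measurableSet_Icc)]
    simp only [Real.volume_Icc, sub_neg_eq_add, Finset.prod_const, Finset.card_univ,
      Fintype.card_fin]
    congr 2; ring
  have hfin' : volume box' < ⊤ := by
    rw [hvol']; exact ENNReal.pow_lt_top ENNReal.ofReal_lt_top
  have haeeq : box' =ᵐ[volume] {ω : EuclideanSpace ℝ (Fin d) |
      ∀ l, ω l ∈ Set.Icc (-((N : ℝ) * Real.pi)) ((N : ℝ) * Real.pi)} := by
    rw [MeasureTheory.ae_eq_set]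
    have hsub : box' ⊆ {ω : EuclideanSpace ℝ (Fin d) |
        ∀ l, ω l ∈ Set.Icc (-((N : ℝ) * Real.pi)) ((N : ℝ) * Real.pi)} :=
      fun ω hω l => ⟨(hω l).1, ((hω l).2).le⟩
    constructor
    · rw [Set.diff_eq_empty.mpr hsub]; simp
    · rw [measure_diff hsub hbox'meas.nullMeasurableSet hfin'.ne, hvol', hvolIcc, tsub_self]
  set φ : ℕ → EuclideanSpace ℝ (Fin d) → EuclideanSpace ℝ (Fin d) :=
    fun m ω => WithLp.toLp 2 (fun i => Real.pi * (⌊(m : ℝ) * ω i / Real.pi⌋ : ℝ) / m) with hφ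
  have hφmeas : ∀ m, Measurable (φ m) := by
    intro m
    have h1 : Measurable fun (ω : EuclideanSpace ℝ (Fin d)) (i : Fin d) =>
        Real.pi * (⌊(m : ℝ) * ω i / Real.pi⌋ : ℝ) / m := by
      refine measurable_pi_lambda _ fun i => ?_
      have hev : Measurable fun ω : EuclideanSpace ℝ (Fin d) => ω i :=
        (measurable_pi_apply i).comp (MeasurableEquiv.toLp 2 (Fin d → ℝ)).symm.measurable
      have hfl : Measurable fun ω : EuclideanSpace ℝ (Fin d) =>
          ((⌊(m : ℝ) * ω i / Real.pi⌋ : ℤ) : ℝ) :=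
        Measurable.comp (measurable_from_top) ((hev.const_mul _).div_const _).floor
      exact (measurable_const.mul hfl).div_const _
    exact (MeasurableEquiv.toLp 2 (Fin d → ℝ)).measurable.comp h1
  have hφbound : ∀ m, ∀ ω ∈ box', ∀ i, |φ m ω i| ≤ ((N : ℝ) + 1) * Real.pi := by
    intro m ω hω i
    rcases Nat.eq_zero_or_pos m with hm | hm
    · subst hm
      have : φ 0 ω i = 0 := by simp [hφ]
      rw [this, abs_zero]; positivity
    · have hb := floor_coord_bound m hm (ω i)
      have hωi := hω i
      have h1 : |ω i| ≤ (N : ℝ) * Real.pi := abs_le.mpr ⟨hωi.1, hωi.2.le⟩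
      have h2 : Real.pi / m ≤ Real.pi := by
        apply div_le_self hπ.le; exact_mod_cast hm
      have h3 : |φ m ω i| - |ω i| ≤ |φ m ω i - ω i| := abs_sub_abs_le_abs_sub _ _
      have h4 : |φ m ω i - ω i| ≤ Real.pi / m := hb
      linarith
  have hφtend : ∀ ω : EuclideanSpace ℝ (Fin d), Tendsto (fun m => φ m ω) atTop (nhds ω) := by
    intro ω
    have key : ∀ c : ℝ, Tendsto (fun m : ℕ =>
        Real.pi * (⌊(m : ℝ) * c / Real.pi⌋ : ℝ) / m) atTop (nhds c) := by
      intro c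
      have h0 : Tendsto (fun m : ℕ => Real.pi / m) atTop (nhds 0) :=
        tendsto_const_div_atTop_nhds_zero_nat Real.pi
      have hlo : Tendsto (fun m : ℕ => c - Real.pi / m) atTop (nhds c) := by
        simpa using tendsto_const_nhds.sub h0
      have hhi : Tendsto (fun m : ℕ => c + Real.pi / m) atTop (nhds c) := by
        simpa using tendsto_const_nhds.add h0
      refine tendsto_of_tendsto_of_tendsto_of_le_of_le' hlo hhi ?_ ?_
      · filter_upwards [eventually_ge_atTop 1] with m hm
        have := abs_le.mp (floor_coord_bound m hm c)
        linarith [this.1]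
      · filter_upwards [eventually_ge_atTop 1] with m hm
        have := abs_le.mp (floor_coord_bound m hm c)
        linarith [this.2]
    have hpi : Tendsto (fun m : ℕ => (fun i => φ m ω i : Fin d → ℝ)) atTop
        (nhds (fun i => ω i)) := tendsto_pi_nhds.mpr fun i => key (ω i)
    exact (((PiLp.continuous_toLp 2 _).tendsto _).comp hpi :)
  have hconv : Tendsto (fun m => ∫ ω in box', f (φ m ω)) atTop
      (nhds (∫ ω in box', f ω)) := by
    refine tendsto_integral_of_dominated_convergence (fun _ => C)
      (fun m => (hf.measurable.comp (hφmeas m)).aestronglyMeasurable) ?_ ?_ ?_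
    · exact integrableOn_const hfin'.ne
    · intro m
      exact (ae_restrict_iff' hbox'meas).mpr (ae_of_all _ fun ω hω => hC _ (hφbound m ω hω))
    · exact ae_of_all _ fun ω => (hf.tendsto ω).comp (hφtend ω)
  have hstep : ∀ m, 1 ≤ m → (∫ ω in box', f (φ m ω))
      = ∑ j ∈ Fintype.piFinset (fun _ : Fin d => Finset.Icc (-((m : ℤ) * N)) ((m : ℤ) * N - 1)),
          (((Real.pi / m) ^ d : ℝ) : ℂ) * f ((Real.pi / (m : ℝ)) • intVec d j) := by
    intro m hm
    have hm' : (0:ℝ) < m := by exact_mod_cast hm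
    set cell : (Fin d → ℤ) → Set (EuclideanSpace ℝ (Fin d)) := fun j =>
      {ω | ∀ i, ω i ∈ Set.Ico (Real.pi * (j i : ℝ) / m) (Real.pi * ((j i : ℝ) + 1) / m)}
      with hcell
    have hcellmeas : ∀ j, MeasurableSet (cell j) :=
      fun j => measurableSet_boxSet _ _ fun _ => measurableSet_Ico
    have hfloor : ∀ j, ∀ ω ∈ cell j, ∀ i, ⌊(m : ℝ) * ω i / Real.pi⌋ = j i :=
      fun j ω hω i => (coord_iff m hm (j i) (ω i)).mp (hω i)
    have hφcell : ∀ j, ∀ ω ∈ cell j, φ m ω = (Real.pi / (m : ℝ)) • intVec d j := by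
      intro j ω hω
      ext i
      show Real.pi * (⌊(m : ℝ) * ω i / Real.pi⌋ : ℝ) / m = (Real.pi / m) * (j i : ℝ)
      rw [hfloor j ω hω i]; ring
    have hdecomp : box' = ⋃ j ∈ Fintype.piFinset (fun _ : Fin d =>
        Finset.Icc (-((m : ℤ) * N)) ((m : ℤ) * N - 1)), cell j := by
      ext ω
      simp only [Set.mem_iUnion, Fintype.mem_piFinset, Finset.mem_Icc, exists_prop, hbox',
        hcell, Set.mem_setOf_eq, Set.mem_Ico]
      constructor
      · intro hω
        refine ⟨fun i => ⌊(m : ℝ) * ω i / Real.pi⌋, fun i => ?_, fun i => ?_⟩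
        · obtain ⟨h1, h2⟩ := hω i
          constructor
          · rw [Int.le_floor]
            push_cast
            rw [le_div_iff₀ hπ]
            nlinarith
          · rw [Int.le_sub_one_iff, Int.floor_lt]
            push_cast
            rw [div_lt_iff₀ hπ]
            nlinarith
        · exact Set.mem_Ico.mp ((coord_iff m hm _ (ω i)).mpr rfl)
      · rintro ⟨j, hjJ, hj⟩ i
        obtain ⟨h1, h2⟩ := hj i
        obtain ⟨hj1, hj2⟩ := hjJ i
        have c1 : (-((m : ℝ) * N)) ≤ (j i : ℝ) := by exact_mod_cast hj1
        have c2 : (j i : ℝ) ≤ (m : ℝ) * N - 1 := by exact_mod_cast hj2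
        constructor
        · have hlo2 : -((N : ℝ) * Real.pi) ≤ Real.pi * (j i : ℝ) / m := by
            rw [le_div_iff₀ hm']; nlinarith
          linarith
        · have hhi2 : Real.pi * ((j i : ℝ) + 1) / m ≤ (N : ℝ) * Real.pi := by
            rw [div_le_iff₀ hm']; nlinarith
          linarith
    have hdisj : Set.Pairwise ↑(Fintype.piFinset fun _ : Fin d =>
        Finset.Icc (-((m : ℤ) * N)) ((m : ℤ) * N - 1)) (Function.onFun Disjoint cell) := by
      intro j _ j' _ hne
      refine Set.disjoint_left.mpr fun ω hω hω' => hne ?_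
      funext i
      rw [← hfloor j ω hω i, hfloor j' ω hω' i]
    have hvolcell : ∀ j : Fin d → ℤ, volume (cell j) = ENNReal.ofReal ((Real.pi / m) ^ d) := by
      intro j
      rw [hcell]
      rw [volume_boxSet _ _ fun _ => measurableSet_Ico]
      have hv : ∀ i : Fin d, volume (Set.Ico (Real.pi * (j i : ℝ) / m)
          (Real.pi * ((j i : ℝ) + 1) / m)) = ENNReal.ofReal (Real.pi / m) := by
        intro i
        rw [Real.volume_Ico]
        congr 1
        field_simp
        ring
      simp only [hv, Finset.prod_const, Finset.card_univ, Fintype.card_fin]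
      rw [← ENNReal.ofReal_pow (by positivity)]
    have hcongr : ∀ j : Fin d → ℤ, (∫ ω in cell j, f (φ m ω))
        = ∫ _ω in cell j, f ((Real.pi / (m : ℝ)) • intVec d j) :=
      fun j => setIntegral_congr_fun (hcellmeas j) (fun ω hω => by rw [hφcell j ω hω])
    have hint : ∀ j : Fin d → ℤ, IntegrableOn (fun ω => f (φ m ω)) (cell j) volume := by
      intro j
      have : IntegrableOn (fun _ω => f ((Real.pi / (m : ℝ)) • intVec d j)) (cell j) volume :=
        integrableOn_const (by rw [hvolcell j]; exact ENNReal.ofReal_ne_top)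
      exact (integrableOn_congr_fun (fun ω hω => by rw [hφcell j ω hω]) (hcellmeas j)).mpr this
    rw [hdecomp, integral_biUnion_finset _ (fun j _ => hcellmeas j) hdisj (fun j _ => hint j)]
    refine Finset.sum_congr rfl fun j _ => ?_
    rw [hcongr j, setIntegral_const, measureReal_def, hvolcell j, ENNReal.toReal_ofReal (by positivity),
      Complex.real_smul]
  have heq : (∫ ω in box', f ω) = ∫ ω in {ω : EuclideanSpace ℝ (Fin d) |
      ∀ l, ω l ∈ Set.Icc (-((N : ℝ) * Real.pi)) ((N : ℝ) * Real.pi)}, f ω :=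
    setIntegral_congr_set haeeq
  rw [← heq]
  refine hconv.congr' ?_
  filter_upwards [eventually_ge_atTop 1] with m hm
  exact hstep m hm

/-- Equivalence of the scaled periodic fractional Laplacian (in the limit of infinite
scale `S = 2m → ∞`) and the sinc-fractional Laplacian: for any grid data
`(u_k)_{k∈{0,…,N−1}^d}` and any grid point `κ`,
`S^{−2s}(2π)^{2s}(SN)^{−d} Σ_k u_k Σ_{j∈{−SN/2,…,SN/2−1}^d} ‖j‖^{2s} e^{2πi⟨j,κ−k⟩/(SN)}`
converges to `Σ_k u_k (2πN)^{−d} ∫_{[−Nπ,Nπ]^d} ‖ω‖^{2s} e^{i⟨ω,κ−k⟩/N} dω`. -/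
theorem scaled_periodic_tendsto_sinc (d N : ℕ) (hd : 1 ≤ d) (hN : 1 ≤ N) (s : ℝ)
    (hs : s ∈ Set.Ioo (0 : ℝ) 1)
    (u : (Fin d → ℕ) → ℝ) (κ : Fin d → ℕ) (hκ : ∀ i, κ i < N) :
    Tendsto
      (fun m : ℕ =>
        (((2 * (m : ℝ)) ^ (-(2 * s)) : ℝ) : ℂ) *
          ((((2 * Real.pi) ^ (2 * s) : ℝ) : ℂ) *
            (((2 * (m : ℝ) * N) ^ (-(d : ℝ)) : ℝ) : ℂ)) *
          ∑ k ∈ Fintype.piFinset (fun _ : Fin d => Finset.range N),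
            (u k : ℂ) *
              ∑ j ∈ Fintype.piFinset
                  (fun _ : Fin d => Finset.Icc (-((m : ℤ) * N)) ((m : ℤ) * N - 1)),
                ((‖intVec d j‖ ^ (2 * s) : ℝ) : ℂ) *
                  Complex.exp (2 * Real.pi * Complex.I *
                    (((inner ℝ (intVec d j)
                          (intVec d (fun i => (κ i : ℤ) - (k i : ℤ))) : ℝ) /
                        (2 * m * N) : ℝ) : ℂ)))
      atTop
      (nhds
        (∑ k ∈ Fintype.piFinset (fun _ : Fin d => Finset.range N),
          (u k : ℂ) *
            ((((2 * Real.pi * N) ^ (-(d : ℝ)) : ℝ) : ℂ) *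
              ∫ ω in {ω : EuclideanSpace ℝ (Fin d) |
                  ∀ l, ω l ∈ Set.Icc (-((N : ℝ) * Real.pi)) ((N : ℝ) * Real.pi)},
                ((‖ω‖ ^ (2 * s) : ℝ) : ℂ) *
                  Complex.exp (Complex.I *
                    (((inner ℝ ω (intVec d (fun i => (κ i : ℤ) - (k i : ℤ))) : ℝ) /
                        N : ℝ) : ℂ))))) := by
  have hπ := Real.pi_pos
  have hs0 : 0 < s := hs.1
  set fK : (Fin d → ℕ) → EuclideanSpace ℝ (Fin d) → ℂ := fun k ω =>
    ((‖ω‖ ^ (2 * s) : ℝ) : ℂ) *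
      Complex.exp (Complex.I *
        (((inner ℝ ω (intVec d (fun i => (κ i : ℤ) - (k i : ℤ))) : ℝ) / N : ℝ) : ℂ)) with hfKdef
  have hfK : ∀ k, Continuous (fK k) := by
    intro k
    apply Continuous.mul
    · exact Complex.continuous_ofReal.comp
        (continuous_norm.rpow_const fun x => Or.inr (by positivity))
    · exact Complex.continuous_exp.comp (continuous_const.mul
        (Complex.continuous_ofReal.comp
          ((continuous_id.inner continuous_const).div_const _)))
  have hnormfK : ∀ k x, ‖fK k x‖ = ‖x‖ ^ (2 * s) := by
    intro k x
    rw [hfKdef]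
    simp only [norm_mul, Complex.norm_real, Real.norm_eq_abs,
      Complex.norm_exp]
    have : (Complex.I * (((inner ℝ x (intVec d (fun i => (κ i : ℤ) - (k i : ℤ))) : ℝ) / N
        : ℝ) : ℂ)).re = 0 := by
      simp [Complex.mul_re]
    rw [this, Real.exp_zero, mul_one,
      _root_.abs_of_nonneg (Real.rpow_nonneg (norm_nonneg _) _)]
  set C : ℝ := (Real.sqrt d * (((N : ℝ) + 1) * Real.pi)) ^ (2 * s) with hCdef
  have hCk : ∀ k, ∀ x : EuclideanSpace ℝ (Fin d),
      (∀ i, |x i| ≤ ((N : ℝ) + 1) * Real.pi) → ‖fK k x‖ ≤ C := by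
    intro k x hx
    rw [hnormfK k x, hCdef]
    exact Real.rpow_le_rpow (norm_nonneg x)
      (norm_le_of_coord d x _ (by positivity) hx) (by positivity)
  have main := fun (k : Fin d → ℕ) =>
    ((riemann_main d N hN (fK k) (hfK k) C (hCk k)).const_mul
        ((((2 * Real.pi * N) ^ (-(d : ℝ)) : ℝ) : ℂ))).const_mul ((u k : ℂ))
  have total := tendsto_finset_sum (Fintype.piFinset (fun _ : Fin d => Finset.range N))
    (fun k _ => main k)
  refine Tendsto.congr' ?_ total
  filter_upwards [eventually_ge_atTop 1] with m hm
  have hm' : (0:ℝ) < m := by exact_mod_cast hm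
  have hN' : (0:ℝ) < N := by exact_mod_cast hN
  rw [Finset.mul_sum]
  refine Finset.sum_congr rfl fun k _ => ?_
  set K := intVec d (fun i => (κ i : ℤ) - (k i : ℤ)) with hK
  set Jm := Fintype.piFinset (fun _ : Fin d => Finset.Icc (-((m : ℤ) * N)) ((m : ℤ) * N - 1))
    with hJm
  have key : ∀ j ∈ Jm,
      ((((2 * Real.pi * N) ^ (-(d : ℝ)) : ℝ) : ℂ)) *
        ((((Real.pi / m) ^ d : ℝ) : ℂ) * fK k ((Real.pi / (m : ℝ)) • intVec d j))
      = (((2 * (m : ℝ)) ^ (-(2 * s)) : ℝ) : ℂ) *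
          ((((2 * Real.pi) ^ (2 * s) : ℝ) : ℂ) *
            (((2 * (m : ℝ) * N) ^ (-(d : ℝ)) : ℝ) : ℂ)) *
        (((‖intVec d j‖ ^ (2 * s) : ℝ) : ℂ) *
          Complex.exp (2 * Real.pi * Complex.I *
            (((inner ℝ (intVec d j) K : ℝ) / (2 * m * N) : ℝ) : ℂ))) := by
    intro j _
    have hexp : Complex.exp (Complex.I *
        (((inner ℝ ((Real.pi / (m : ℝ)) • intVec d j) K : ℝ) / N : ℝ) : ℂ))
        = Complex.exp (2 * Real.pi * Complex.I *
            (((inner ℝ (intVec d j) K : ℝ) / (2 * m * N) : ℝ) : ℂ)) := by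
      congr 1
      rw [real_inner_smul_left]
      have hmc : ((m : ℝ) : ℂ) ≠ 0 := by exact_mod_cast hm'.ne'
      have hNc : ((N : ℝ) : ℂ) ≠ 0 := by exact_mod_cast hN'.ne'
      push_cast
      field_simp
    have hnorm : ‖(Real.pi / (m : ℝ)) • intVec d j‖ ^ (2 * s)
        = (Real.pi / m) ^ (2 * s) * ‖intVec d j‖ ^ (2 * s) := by
      rw [norm_smul, Real.norm_of_nonneg (by positivity),
        Real.mul_rpow (by positivity) (norm_nonneg _)]
    have R1' : (2 * (m : ℝ)) ^ (-(2 * s)) * (2 * Real.pi) ^ (2 * s)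
        = (Real.pi / (m : ℝ)) ^ (2 * s) := by
      rw [Real.rpow_neg (by positivity), ← Real.inv_rpow (by positivity),
        ← Real.mul_rpow (by positivity) (by positivity)]
      congr 1
      field_simp
    have R2 : (2 * (m : ℝ) * N) ^ (-(d : ℝ))
        = (2 * Real.pi * N) ^ (-(d : ℝ)) * (Real.pi / m) ^ d := by
      rw [Real.rpow_neg (by positivity), Real.rpow_natCast,
        Real.rpow_neg (by positivity), Real.rpow_natCast, ← inv_pow, ← inv_pow, ← mul_pow]
      congr 1
      field_simp
    have hreal : (2 * Real.pi * N) ^ (-(d : ℝ)) *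
        ((Real.pi / m) ^ d * ‖(Real.pi / (m : ℝ)) • intVec d j‖ ^ (2 * s))
        = (2 * (m : ℝ)) ^ (-(2 * s)) * ((2 * Real.pi) ^ (2 * s) *
            (2 * (m : ℝ) * N) ^ (-(d : ℝ))) * ‖intVec d j‖ ^ (2 * s) := by
      rw [hnorm, R2, ← R1']
      ring
    calc ((((2 * Real.pi * N) ^ (-(d : ℝ)) : ℝ) : ℂ)) *
        ((((Real.pi / m) ^ d : ℝ) : ℂ) * fK k ((Real.pi / (m : ℝ)) • intVec d j))
        = (((2 * Real.pi * N) ^ (-(d : ℝ)) *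
            ((Real.pi / m) ^ d * ‖(Real.pi / (m : ℝ)) • intVec d j‖ ^ (2 * s)) : ℝ) : ℂ) *
            Complex.exp (Complex.I *
              (((inner ℝ ((Real.pi / (m : ℝ)) • intVec d j) K : ℝ) / N : ℝ) : ℂ)) := by
          rw [hfKdef]
          push_cast
          ring
      _ = _ := by
          rw [hreal, hexp]
          push_cast
          ring
  calc (u k : ℂ) * (((((2 * Real.pi * N) ^ (-(d : ℝ)) : ℝ) : ℂ)) *
        ∑ j ∈ Jm, (((Real.pi / m) ^ d : ℝ) : ℂ) * fK k ((Real.pi / (m : ℝ)) • intVec d j))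
      = (u k : ℂ) * ∑ j ∈ Jm, ((((2 * Real.pi * N) ^ (-(d : ℝ)) : ℝ) : ℂ)) *
          ((((Real.pi / m) ^ d : ℝ) : ℂ) * fK k ((Real.pi / (m : ℝ)) • intVec d j)) := by
        rw [Finset.mul_sum]
    _ = (u k : ℂ) * ∑ j ∈ Jm,
          (((2 * (m : ℝ)) ^ (-(2 * s)) : ℝ) : ℂ) *
            ((((2 * Real.pi) ^ (2 * s) : ℝ) : ℂ) *
              (((2 * (m : ℝ) * N) ^ (-(d : ℝ)) : ℝ) : ℂ)) *
          (((‖intVec d j‖ ^ (2 * s) : ℝ) : ℂ) *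
            Complex.exp (2 * Real.pi * Complex.I *
              (((inner ℝ (intVec d j) K : ℝ) / (2 * m * N) : ℝ) : ℂ))) := by
        rw [Finset.sum_congr rfl key]
    _ = (((2 * (m : ℝ)) ^ (-(2 * s)) : ℝ) : ℂ) *
          ((((2 * Real.pi) ^ (2 * s) : ℝ) : ℂ) *
            (((2 * (m : ℝ) * N) ^ (-(d : ℝ)) : ℝ) : ℂ)) *
        ((u k : ℂ) * ∑ j ∈ Jm,
          (((‖intVec d j‖ ^ (2 * s) : ℝ) : ℂ) *
            Complex.exp (2 * Real.pi * Complex.I *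
              (((inner ℝ (intVec d j) K : ℝ) / (2 * m * N) : ℝ) : ℂ)))) := by
        rw [Finset.mul_sum, Finset.mul_sum]
        ring_nf
        rw [Finset.mul_sum]
        refine Finset.sum_congr rfl fun j _ => ?_
        ring
end

section
/- Let d ≥ 1, N ≥ 1 and N_Q ≥ 1 be integers, s ∈ (0,1), and set S = 2·N_Q. Define Y(x) = Σ_{m=−N}^{N−1} e^{imx} for x ∈ ℝ. Then for every k ∈ ℤ^d, Σ_{κ ∈ {−N,…,N−1}^d} [ (2π)^{2s}·S^{−2s}·(SN)^{−d} · Σ_{j ∈ {−N·N_Q, …, N·N_Q − 1}^d} ‖j‖^{2s} · e^{2πi⟨j, κ⟩/(SN)} ] · e^{−iπ⟨κ, k⟩/N} = π^{2s}·(2N)^{−d}·N_Q^{−d} · Σ_{j ∈ {−N·N_Q, …, N·N_Q − 1}^d} ‖j/N_Q‖^{2s} · Π_{l=1}^d Y((π/N)·(j_l/N_Q − k_l)). -/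
open MeasureTheory Filter Complex

lemma sum_prod_exp (d N : ℕ) (θ : Fin d → ℝ) :
    ∑ κ ∈ Fintype.piFinset (fun _ : Fin d => Finset.Icc (-(N : ℤ)) ((N : ℤ) - 1)),
      ∏ l : Fin d, Complex.exp (Complex.I * ((κ l : ℤ) : ℂ) * ((θ l : ℝ) : ℂ))
    = ∏ l : Fin d, dirichletY N (θ l) := by
  exact (Finset.prod_univ_sum (fun _ : Fin d => Finset.Icc (-(N : ℤ)) ((N : ℤ) - 1))
    (fun l m => Complex.exp (Complex.I * ((m : ℤ) : ℂ) * ((θ l : ℝ) : ℂ)))).symm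

/-- With the uniform quadrature rule with `N_Q` points per unit length, the `(2N)^d`-point
discrete Fourier transform of the kernel of the discrete scaled periodic fractional
Laplacian with scale factor `S = 2N_Q` equals the quadrature evaluation of the discrete
Fourier transform of the sinc-fractional Laplacian kernel. -/
theorem periodic_kernel_dft_eq_quadrature (d N NQ : ℕ) (hd : 1 ≤ d) (hN : 1 ≤ N)
    (hNQ : 1 ≤ NQ) (s : ℝ) (hs : s ∈ Set.Ioo (0 : ℝ) 1) (k : Fin d → ℤ) :
    (∑ κ ∈ Fintype.piFinset (fun _ : Fin d => Finset.Icc (-(N : ℤ)) ((N : ℤ) - 1)),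
        ((((2 * Real.pi) ^ (2 * s) : ℝ) : ℂ) *
            (((2 * (NQ : ℝ)) ^ (-(2 * s)) : ℝ) : ℂ) *
            (((2 * (NQ : ℝ) * N) ^ (-(d : ℝ)) : ℝ) : ℂ) *
            ∑ j ∈ Fintype.piFinset
                (fun _ : Fin d => Finset.Icc (-((N : ℤ) * NQ)) ((N : ℤ) * NQ - 1)),
              ((‖intVec d j‖ ^ (2 * s) : ℝ) : ℂ) *
                Complex.exp (2 * Real.pi * Complex.I *
                  (((inner ℝ (intVec d j) (intVec d κ) : ℝ) /
                      (2 * NQ * N) : ℝ) : ℂ))) *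
          Complex.exp (-Complex.I *
            ((Real.pi * (inner ℝ (intVec d κ) (intVec d k) : ℝ) / N : ℝ) : ℂ)))
      = ((Real.pi ^ (2 * s) : ℝ) : ℂ) * (((2 * (N : ℝ)) ^ (-(d : ℝ)) : ℝ) : ℂ) *
          (((NQ : ℝ) ^ (-(d : ℝ)) : ℝ) : ℂ) *
          ∑ j ∈ Fintype.piFinset
              (fun _ : Fin d => Finset.Icc (-((N : ℤ) * NQ)) ((N : ℤ) * NQ - 1)),
            ((‖(NQ : ℝ)⁻¹ • intVec d j‖ ^ (2 * s) : ℝ) : ℂ) *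
              ∏ l : Fin d,
                dirichletY N (Real.pi / N * ((j l : ℝ) / NQ - (k l : ℝ))) := by
  obtain ⟨hs0, hs1⟩ := hs
  have hNpos : (0:ℝ) < N := by exact_mod_cast hN
  have hNQpos : (0:ℝ) < NQ := by exact_mod_cast hNQ
  have hNne : (N:ℂ) ≠ 0 := by exact_mod_cast hNpos.ne'
  have hNQne : (NQ:ℂ) ≠ 0 := by exact_mod_cast hNQpos.ne'
  -- exponential identity
  have hexp : ∀ j κ : Fin d → ℤ,
      Complex.exp (2 * Real.pi * Complex.I *
          (((inner ℝ (intVec d j) (intVec d κ) : ℝ) / (2 * NQ * N) : ℝ) : ℂ)) *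
        Complex.exp (-Complex.I *
          ((Real.pi * (inner ℝ (intVec d κ) (intVec d k) : ℝ) / N : ℝ) : ℂ))
      = ∏ l : Fin d, Complex.exp (Complex.I * ((κ l : ℤ) : ℂ) *
          (((Real.pi / N * ((j l : ℝ) / NQ - (k l : ℝ)) : ℝ)) : ℂ)) := by
    intro j κ
    rw [Finset.prod_congr rfl (fun l _ => rfl), ← Complex.exp_sum, ← Complex.exp_add]
    congr 1
    have h1 : (inner ℝ (intVec d j) (intVec d κ) : ℝ) = ∑ l, (j l : ℝ) * (κ l : ℝ) := by
      simp [intVec, PiLp.inner_apply]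
      exact Finset.sum_congr rfl fun _ _ => mul_comm _ _
    have h2 : (inner ℝ (intVec d κ) (intVec d k) : ℝ) = ∑ l, (κ l : ℝ) * (k l : ℝ) := by
      simp [intVec, PiLp.inner_apply]
      exact Finset.sum_congr rfl fun _ _ => mul_comm _ _
    rw [h1, h2]
    push_cast
    simp only [Finset.mul_sum, Finset.sum_div, div_eq_mul_inv, Finset.sum_mul]
    rw [← Finset.sum_add_distrib]
    refine Finset.sum_congr rfl fun l _ => ?_
    field_simp
    ring
  -- norm/constant identity
  have hnorm : ∀ j : Fin d → ℤ,
      (2 * Real.pi) ^ (2 * s) * (2 * (NQ : ℝ)) ^ (-(2 * s)) *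
        (2 * (NQ : ℝ) * N) ^ (-(d : ℝ)) * ‖intVec d j‖ ^ (2 * s)
      = Real.pi ^ (2 * s) * (2 * (N : ℝ)) ^ (-(d : ℝ)) * (NQ : ℝ) ^ (-(d : ℝ)) *
        ‖(NQ : ℝ)⁻¹ • intVec d j‖ ^ (2 * s) := by
    intro j
    have hr : (0:ℝ) ≤ ‖intVec d j‖ := norm_nonneg _
    rw [norm_smul, Real.norm_eq_abs, abs_inv, abs_of_pos hNQpos]
    rw [show (2*(NQ:ℝ)*N) = (2*N)*NQ by ring]
    have e1 : ((2:ℝ)*N*NQ) ^ ((d:ℝ)) = (2*(N:ℝ)) ^ ((d:ℝ)) * (NQ:ℝ) ^ ((d:ℝ)) :=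
      Real.mul_rpow (by positivity) (by positivity)
    have e2 : ((2:ℝ)*Real.pi) ^ (2*s) = 2 ^ (2*s) * Real.pi ^ (2*s) :=
      Real.mul_rpow (by norm_num) Real.pi_pos.le
    have e3 : ((2:ℝ)*NQ) ^ (2*s) = 2 ^ (2*s) * (NQ:ℝ) ^ (2*s) :=
      Real.mul_rpow (by norm_num) hNQpos.le
    rw [Real.rpow_neg (by positivity), Real.rpow_neg (by positivity),
      Real.rpow_neg (by positivity), Real.rpow_neg (by positivity),
      show (NQ:ℝ)⁻¹ * ‖intVec d j‖ = ‖intVec d j‖ / NQ by ring,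
      Real.div_rpow hr hNQpos.le, e1, e2, e3]
    have h2 : (2:ℝ) ^ (2*s) ≠ 0 := by positivity
    have h3 : (NQ:ℝ) ^ (2*s) ≠ 0 := by positivity
    have h4 : ((2:ℝ)*N) ^ ((d:ℝ)) ≠ 0 := by positivity
    have h5 : (NQ:ℝ) ^ ((d:ℝ)) ≠ 0 := by positivity
    field_simp
  -- main computation
  rw [Finset.sum_congr rfl (fun κ _ => by
    rw [Finset.mul_sum, Finset.sum_mul])]
  rw [Finset.sum_comm]
  rw [Finset.mul_sum]
  refine Finset.sum_congr rfl fun j hj => ?_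
  have : ∀ κ ∈ Fintype.piFinset (fun _ : Fin d => Finset.Icc (-(N : ℤ)) ((N : ℤ) - 1)),
      (((2 * Real.pi) ^ (2 * s) : ℝ) : ℂ) * (((2 * (NQ : ℝ)) ^ (-(2 * s)) : ℝ) : ℂ) *
        (((2 * (NQ : ℝ) * N) ^ (-(d : ℝ)) : ℝ) : ℂ) *
        (((‖intVec d j‖ ^ (2 * s) : ℝ) : ℂ) *
          Complex.exp (2 * Real.pi * Complex.I *
            (((inner ℝ (intVec d j) (intVec d κ) : ℝ) / (2 * NQ * N) : ℝ) : ℂ))) *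
        Complex.exp (-Complex.I *
          ((Real.pi * (inner ℝ (intVec d κ) (intVec d k) : ℝ) / N : ℝ) : ℂ))
      = (((Real.pi ^ (2 * s) : ℝ) : ℂ) * (((2 * (N : ℝ)) ^ (-(d : ℝ)) : ℝ) : ℂ) *
          (((NQ : ℝ) ^ (-(d : ℝ)) : ℝ) : ℂ) * ((‖(NQ : ℝ)⁻¹ • intVec d j‖ ^ (2 * s) : ℝ) : ℂ)) *
        ∏ l : Fin d, Complex.exp (Complex.I * ((κ l : ℤ) : ℂ) *
          (((Real.pi / N * ((j l : ℝ) / NQ - (k l : ℝ)) : ℝ)) : ℂ)) := by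
    intro κ hκ
    rw [mul_assoc, mul_assoc, ← hexp j κ]
    have hc : (((2 * Real.pi) ^ (2 * s) : ℝ) : ℂ) * ((((2 * (NQ : ℝ)) ^ (-(2 * s)) : ℝ)) : ℂ) *
        ((((2 * (NQ : ℝ) * N) ^ (-(d : ℝ)) : ℝ)) : ℂ) * ((‖intVec d j‖ ^ (2 * s) : ℝ) : ℂ)
        = (((Real.pi ^ (2 * s) : ℝ) : ℂ) * (((2 * (N : ℝ)) ^ (-(d : ℝ)) : ℝ) : ℂ) *
          (((NQ : ℝ) ^ (-(d : ℝ)) : ℝ) : ℂ) * ((‖(NQ : ℝ)⁻¹ • intVec d j‖ ^ (2 * s) : ℝ) : ℂ)) := by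
      exact_mod_cast hnorm j
    rw [← hc]
    ring
  rw [Finset.sum_congr rfl this, ← Finset.mul_sum, sum_prod_exp]
  push_cast
  ring
end
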